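/- arXiv:2503.24022 — 8 statements merged into one kernel-verified Lean document; each statement's English description precedes it below -/
import Mathlib

section
/- Let A ∈ ℝ^{n×n} be symmetric and b, x₀ ∈ ℝⁿ. Then the unique solution of the linear ODE ẋ(t) = A x(t) + b with x(0) = x₀ is given for all t ∈ ℝ by x(t) = e^{At}(x₀ + A⁺ b) + t P_A b − A⁺ b. -/
open Matrix MeasureTheory ProbabilityTheory
open scoped Classical

noncomputable section

/-- Moore–Penrose pseudoinverse `A⁺` of a real square matrix: the unique `B` with
`A B A = A`, `B A B = B`, and `A B`, `B A` symmetric. -/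
def pinv {n : ℕ} (A : Matrix (Fin n) (Fin n) ℝ) : Matrix (Fin n) (Fin n) ℝ :=
  if h : ∃ B : Matrix (Fin n) (Fin n) ℝ,
      A * B * A = A ∧ B * A * B = B ∧ (A * B)ᵀ = A * B ∧ (B * A)ᵀ = B * A
  then h.choose else 0

/-- `P_A = I - A A⁺`, the orthogonal projection onto the null space of `A`. -/
def nullProj {n : ℕ} (A : Matrix (Fin n) (Fin n) ℝ) : Matrix (Fin n) (Fin n) ℝ :=
  1 - A * pinv A

/-- The matrix exponential `e^A`. -/
def mexp {n : ℕ} (A : Matrix (Fin n) (Fin n) ℝ) : Matrix (Fin n) (Fin n) ℝ :=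
  NormedSpace.exp A

/-- The (symmetric) positive semidefinite square root of a positive semidefinite matrix
(junk value `0` if no such root exists). -/
def msqrt {n : ℕ} (S : Matrix (Fin n) (Fin n) ℝ) : Matrix (Fin n) (Fin n) ℝ :=
  if h : ∃ B : Matrix (Fin n) (Fin n) ℝ, B.PosSemidef ∧ B * B = S then h.choose else 0

/-- The matrix logarithm of a symmetric positive definite matrix: the unique symmetric `A`
with `e^A = S` (junk value `0` if no such `A` exists). -/
def matLog {n : ℕ} (S : Matrix (Fin n) (Fin n) ℝ) : Matrix (Fin n) (Fin n) ℝ :=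
  if h : ∃ A : Matrix (Fin n) (Fin n) ℝ, A.IsSymm ∧ mexp A = S then h.choose else 0

/-- The quadratic potential `f(x) = ½ xᵀ A x + bᵀ x`. -/
def quadf {n : ℕ} (A : Matrix (Fin n) (Fin n) ℝ) (b x : Fin n → ℝ) : ℝ :=
  (1 / 2) * (x ⬝ᵥ (A *ᵥ x)) + b ⬝ᵥ x

/-- Squared Euclidean norm `‖v‖²` on `ℝⁿ`. -/
def sqNorm {n : ℕ} (v : Fin n → ℝ) : ℝ := ∑ i, (v i) ^ 2

/-- Squared Frobenius norm `‖M‖_F²`. -/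
def frobSq {n : ℕ} (M : Matrix (Fin n) (Fin n) ℝ) : ℝ := ∑ i, ∑ j, (M i j) ^ 2

/-- The flow map `φ : (t, x₀) ↦ x(t)` of the ODE `ẋ = A x + b`, `x(0) = x₀`. -/
def flowMap {n : ℕ} (A : Matrix (Fin n) (Fin n) ℝ) (b : Fin n → ℝ) :
    ℝ → (Fin n → ℝ) → (Fin n → ℝ) :=
  if h : ∃ φ : ℝ → (Fin n → ℝ) → (Fin n → ℝ),
      (∀ x₀, φ 0 x₀ = x₀) ∧ ∀ x₀ t, HasDerivAt (fun s => φ s x₀) (A *ᵥ (φ t x₀) + b) t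
  then h.choose else fun _ x => x

/-- The standard Gaussian measure on `ℝⁿ`. -/
def stdGaussianPi (n : ℕ) : Measure (Fin n → ℝ) :=
  Measure.pi fun _ => gaussianReal 0 1

/-- The multivariate Gaussian measure `N(μ, Σ)` on `ℝⁿ` (for `Σ` positive semidefinite),
realized as the pushforward of the standard Gaussian by `x ↦ μ + √Σ x`. -/
def multiGaussian {n : ℕ} (μ : Fin n → ℝ) (S : Matrix (Fin n) (Fin n) ℝ) :
    Measure (Fin n → ℝ) :=
  (stdGaussianPi n).map (fun x => μ + (msqrt S) *ᵥ x)

/-- The Wasserstein KL-divergence `D_WKL(μ‖ν)`: for the quadratic potential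
`f(x) = ½ xᵀ A x + bᵀ x` (`A` symmetric) whose gradient flow `φ` pushes `μ` forward to `ν`
at time 1, it is `∫ ∫₀¹ (f(φ₁ x) - f(φ_t x)) dt dμ(x)` (junk value `0` if no such `f`). -/
def DWKL {n : ℕ} (μ ν : Measure (Fin n → ℝ)) : ℝ :=
  if h : ∃ p : Matrix (Fin n) (Fin n) ℝ × (Fin n → ℝ),
      p.1.IsSymm ∧ μ.map (flowMap p.1 p.2 1) = ν then
    ∫ x, (∫ t in (0:ℝ)..1,
        (quadf h.choose.1 h.choose.2 (flowMap h.choose.1 h.choose.2 1 x)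
          - quadf h.choose.1 h.choose.2 (flowMap h.choose.1 h.choose.2 t x))) ∂μ
  else 0

/-- The flow map of the one-dimensional ODE `ẋ = a x + b`. -/
def flow1 (a b : ℝ) : ℝ → ℝ → ℝ :=
  if h : ∃ φ : ℝ → ℝ → ℝ,
      (∀ x₀, φ 0 x₀ = x₀) ∧ ∀ x₀ t, HasDerivAt (fun s => φ s x₀) (a * φ t x₀ + b) t
  then h.choose else fun _ x => x

/-- The quadratic potential `f(x) = ½ a x² + b x` on `ℝ`. -/
def quad1 (a b x : ℝ) : ℝ := (1 / 2) * a * x ^ 2 + b * x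

/-- The Wasserstein KL-divergence for measures on `ℝ`. -/
def DWKL1 (μ ν : Measure ℝ) : ℝ :=
  if h : ∃ p : ℝ × ℝ, μ.map (flow1 p.1 p.2 1) = ν then
    ∫ x, (∫ t in (0:ℝ)..1,
        (quad1 h.choose.1 h.choose.2 (flow1 h.choose.1 h.choose.2 1 x)
          - quad1 h.choose.1 h.choose.2 (flow1 h.choose.1 h.choose.2 t x))) ∂μ
  else 0

end


section Stmt0Aux

open NormedSpace Matrix

attribute [local instance] Matrix.linftyOpSemiNormedRing Matrix.linftyOpNormedRing
  Matrix.linftyOpNormedAlgebra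

variable {n : ℕ}

/-- Existence of a Moore–Penrose pseudoinverse for a symmetric real matrix. -/
theorem exists_penrose {A : Matrix (Fin n) (Fin n) ℝ} (hA : A.IsSymm) :
    ∃ B : Matrix (Fin n) (Fin n) ℝ,
      A * B * A = A ∧ B * A * B = B ∧ (A * B)ᵀ = A * B ∧ (B * A)ᵀ = B * A := by
  have hH : A.IsHermitian := by
    rwa [Matrix.IsHermitian, Matrix.conjTranspose_eq_transpose_of_trivial]
  set U : Matrix (Fin n) (Fin n) ℝ := ↑(hH.eigenvectorUnitary) with hUdef
  set d : Fin n → ℝ := RCLike.ofReal ∘ hH.eigenvalues with hddef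
  have hspec : A = U * Matrix.diagonal d * star U := hH.spectral_theorem
  have hU1 : star U * U = 1 := Matrix.mem_unitaryGroup_iff'.mp (hH.eigenvectorUnitary).2
  set e : Fin n → ℝ := fun i => if d i = 0 then 0 else (d i)⁻¹ with hedef
  have key : ∀ M N : Matrix (Fin n) (Fin n) ℝ,
      (U * M * star U) * (U * N * star U) = U * (M * N) * star U := by
    intro M N
    simp only [Matrix.mul_assoc]
    rw [← Matrix.mul_assoc (star U) U (N * star U), hU1, Matrix.one_mul]
  have hsym : ∀ f : Fin n → ℝ, (U * Matrix.diagonal f * star U)ᵀ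
      = U * Matrix.diagonal f * star U := by
    intro f
    rw [Matrix.star_eq_conjTranspose, Matrix.conjTranspose_eq_transpose_of_trivial,
      Matrix.transpose_mul, Matrix.transpose_mul, Matrix.transpose_transpose,
      Matrix.diagonal_transpose, Matrix.mul_assoc]
  have hded : (fun i => d i * e i * d i) = d := by
    funext i
    by_cases h : d i = 0
    · simp [hedef, h]
    · field_simp [hedef, h]
      simp [hedef, h]
  have hede : (fun i => e i * d i * e i) = e := by
    funext i
    by_cases h : d i = 0
    · simp [hedef, h]
    · field_simp [hedef, h]
      simp [hedef, h]
  refine ⟨U * Matrix.diagonal e * star U, ?_, ?_, ?_, ?_⟩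
  · rw [hspec, key, key, Matrix.diagonal_mul_diagonal, Matrix.diagonal_mul_diagonal]
    exact congrArg (fun D => U * Matrix.diagonal D * star U) hded
  · rw [hspec, key, key, Matrix.diagonal_mul_diagonal, Matrix.diagonal_mul_diagonal]
    exact congrArg (fun D => U * Matrix.diagonal D * star U) hede
  · rw [hspec, key, Matrix.diagonal_mul_diagonal]; exact hsym _
  · rw [hspec, key, Matrix.diagonal_mul_diagonal]; exact hsym _

/-- Uniqueness of the Moore–Penrose pseudoinverse. -/
theorem penrose_unique {A B C : Matrix (Fin n) (Fin n) ℝ}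
    (hB1 : A * B * A = A) (hB2 : B * A * B = B) (hB3 : (A * B)ᵀ = A * B)
    (hB4 : (B * A)ᵀ = B * A)
    (hC1 : A * C * A = A) (hC2 : C * A * C = C) (hC3 : (A * C)ᵀ = A * C)
    (hC4 : (C * A)ᵀ = C * A) : B = C := by
  have hAB : A * B = A * C := by
    calc A * B = (A * B)ᵀ := hB3.symm
    _ = Bᵀ * Aᵀ := Matrix.transpose_mul A B
    _ = Bᵀ * (A * C * A)ᵀ := by rw [hC1]
    _ = Bᵀ * (Aᵀ * (A * C)ᵀ) := by rw [Matrix.transpose_mul (A * C) A]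
    _ = (Bᵀ * Aᵀ) * (A * C)ᵀ := by rw [Matrix.mul_assoc]
    _ = (A * B)ᵀ * (A * C)ᵀ := by rw [Matrix.transpose_mul A B]
    _ = (A * B) * (A * C) := by rw [hB3, hC3]
    _ = (A * B * A) * C := by rw [Matrix.mul_assoc (A * B) A C]
    _ = A * C := by rw [hB1]
  have hBA : B * A = C * A := by
    calc B * A = (B * A)ᵀ := hB4.symm
    _ = Aᵀ * Bᵀ := Matrix.transpose_mul B A
    _ = (A * C * A)ᵀ * Bᵀ := by rw [hC1]
    _ = ((C * A)ᵀ * Aᵀ) * Bᵀ := by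
        rw [Matrix.mul_assoc A C A, Matrix.transpose_mul A (C * A)]
    _ = (C * A)ᵀ * (Aᵀ * Bᵀ) := by rw [Matrix.mul_assoc]
    _ = (C * A)ᵀ * (B * A)ᵀ := by rw [Matrix.transpose_mul B A]
    _ = (C * A) * (B * A) := by rw [hB4, hC4]
    _ = C * (A * B * A) := by
        rw [Matrix.mul_assoc C A (B * A), Matrix.mul_assoc A B A]
    _ = C * A := by rw [hB1]
  calc B = B * A * B := hB2.symm
  _ = (C * A) * B := by rw [hBA]
  _ = C * (A * B) := Matrix.mul_assoc C A B
  _ = C * (A * C) := by rw [hAB]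
  _ = C * A * C := (Matrix.mul_assoc C A C).symm
  _ = C := hC2

theorem pinv_conds {A : Matrix (Fin n) (Fin n) ℝ} (hA : A.IsSymm) :
    A * pinv A * A = A ∧ pinv A * A * pinv A = pinv A ∧
      (A * pinv A)ᵀ = A * pinv A ∧ (pinv A * A)ᵀ = pinv A * A := by
  have h := exists_penrose hA
  rw [pinv, dif_pos h]
  exact h.choose_spec

theorem pinv_transpose {A : Matrix (Fin n) (Fin n) ℝ} (hA : A.IsSymm) :
    (pinv A)ᵀ = pinv A := by
  obtain ⟨h1, h2, h3, h4⟩ := pinv_conds hA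
  have hAT : Aᵀ = A := hA
  set B := pinv A with hB
  refine penrose_unique (A := A) ?_ ?_ ?_ ?_ h1 h2 h3 h4
  · calc A * Bᵀ * A = Aᵀ * Bᵀ * Aᵀ := by rw [hAT]
    _ = (A * B * A)ᵀ := by
        rw [Matrix.transpose_mul (A * B) A, Matrix.transpose_mul A B, Matrix.mul_assoc]
    _ = A := by rw [h1, hAT]
  · calc Bᵀ * A * Bᵀ = Bᵀ * Aᵀ * Bᵀ := by rw [hAT]
    _ = (B * A * B)ᵀ := by
        rw [Matrix.transpose_mul (B * A) B, Matrix.transpose_mul B A, Matrix.mul_assoc]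
    _ = Bᵀ := by rw [h2]
  · calc (A * Bᵀ)ᵀ = B * Aᵀ := by rw [Matrix.transpose_mul A Bᵀ, Matrix.transpose_transpose]
    _ = B * A := by rw [hAT]
    _ = (B * A)ᵀ := h4.symm
    _ = Aᵀ * Bᵀ := Matrix.transpose_mul B A
    _ = A * Bᵀ := by rw [hAT]
  · calc (Bᵀ * A)ᵀ = Aᵀ * B := by rw [Matrix.transpose_mul Bᵀ A, Matrix.transpose_transpose]
    _ = A * B := by rw [hAT]
    _ = (A * B)ᵀ := h3.symm
    _ = Bᵀ * Aᵀ := Matrix.transpose_mul A B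
    _ = Bᵀ * A := by rw [hAT]

theorem pinv_comm {A : Matrix (Fin n) (Fin n) ℝ} (hA : A.IsSymm) :
    A * pinv A = pinv A * A := by
  obtain ⟨h1, h2, h3, h4⟩ := pinv_conds hA
  have hAT : Aᵀ = A := hA
  calc A * pinv A = (A * pinv A)ᵀ := h3.symm
  _ = (pinv A)ᵀ * Aᵀ := Matrix.transpose_mul A (pinv A)
  _ = pinv A * A := by rw [pinv_transpose hA, hAT]

theorem A_mul_nullProj {A : Matrix (Fin n) (Fin n) ℝ} (hA : A.IsSymm) :
    A * nullProj A = 0 := by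
  obtain ⟨h1, _, _, _⟩ := pinv_conds hA
  have : A * (A * pinv A) = A := by
    rw [pinv_comm hA, ← Matrix.mul_assoc, h1]
  rw [nullProj, Matrix.mul_sub, Matrix.mul_one, this, sub_self]

/-- `M ↦ M *ᵥ v` and `v ↦ M *ᵥ v` as a continuous bilinear map. -/
noncomputable def mulVecCLM (n : ℕ) :
    Matrix (Fin n) (Fin n) ℝ →L[ℝ] ((Fin n → ℝ) →L[ℝ] (Fin n → ℝ)) :=
  LinearMap.toContinuousLinearMap
    { toFun := fun M => LinearMap.toContinuousLinearMap M.mulVecLin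
      map_add' := fun M N => by
        ext v i
        simp [Matrix.add_mulVec]
      map_smul' := fun c M => by
        ext v i
        simp [Matrix.smul_mulVec] }

@[simp] theorem mulVecCLM_apply (M : Matrix (Fin n) (Fin n) ℝ) (v : Fin n → ℝ) :
    mulVecCLM n M v = M *ᵥ v := rfl

theorem HasDerivAt.mulVecConst {f : ℝ → Matrix (Fin n) (Fin n) ℝ}
    {f' : Matrix (Fin n) (Fin n) ℝ} {t : ℝ} (hf : HasDerivAt f f' t) (v : Fin n → ℝ) :
    HasDerivAt (fun s => f s *ᵥ v) (f' *ᵥ v) t := by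
  have h := HasDerivAt.clm_apply
    ((mulVecCLM n).hasFDerivAt.comp_hasDerivAt t hf) (hasDerivAt_const t v)
  simp at h
  exact h

theorem hasDerivAt_mexp_smul (A : Matrix (Fin n) (Fin n) ℝ) (t : ℝ) :
    HasDerivAt (fun s : ℝ => mexp (s • A)) (A * mexp (t • A)) t := by
  exact hasDerivAt_exp_smul_const' (𝕂 := ℝ) A t

theorem hasDerivAt_mexp_neg_smul (A : Matrix (Fin n) (Fin n) ℝ) (t : ℝ) :
    HasDerivAt (fun s : ℝ => mexp (-(s • A))) (-(A * mexp (-(t • A)))) t := by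
  have h := hasDerivAt_exp_smul_const' (𝕂 := ℝ) (-A) t
  simp only [smul_neg] at h
  have : -A * NormedSpace.exp (-(t • A)) = -(A * NormedSpace.exp (-(t • A))) := neg_mul _ _
  exact h.congr_deriv this

theorem mexp_mul_mexp_neg (A : Matrix (Fin n) (Fin n) ℝ) (t : ℝ) :
    mexp (t • A) * mexp (-(t • A)) = 1 := by
  have h := NormedSpace.exp_add_of_commute (Commute.neg_right (Commute.refl (t • A)))
  rw [add_neg_cancel, NormedSpace.exp_zero] at h
  exact h.symm

theorem commute_mexp (A : Matrix (Fin n) (Fin n) ℝ) (M : Matrix (Fin n) (Fin n) ℝ)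
    (h : Commute A M) : Commute A (mexp M) :=
  Commute.exp_right h

/-- The candidate solution. -/
noncomputable def cand (A : Matrix (Fin n) (Fin n) ℝ) (b x₀ : Fin n → ℝ) (t : ℝ) :
    Fin n → ℝ :=
  mexp (t • A) *ᵥ (x₀ + pinv A *ᵥ b) + t • (nullProj A *ᵥ b) - pinv A *ᵥ b

theorem cand_zero (A : Matrix (Fin n) (Fin n) ℝ) (b x₀ : Fin n → ℝ) :
    cand A b x₀ 0 = x₀ := by
  simp only [cand, zero_smul, mexp, NormedSpace.exp_zero, Matrix.one_mulVec]
  abel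

theorem cand_hasDerivAt {A : Matrix (Fin n) (Fin n) ℝ} (hA : A.IsSymm)
    (b x₀ : Fin n → ℝ) (t : ℝ) :
    HasDerivAt (cand A b x₀) (A *ᵥ cand A b x₀ t + b) t := by
  set v := x₀ + pinv A *ᵥ b with hv
  have h1 : HasDerivAt (fun s : ℝ => mexp (s • A) *ᵥ v) ((A * mexp (t • A)) *ᵥ v) t :=
    (hasDerivAt_mexp_smul A t).mulVecConst v
  have h2 : HasDerivAt (fun s : ℝ => s • (nullProj A *ᵥ b)) (nullProj A *ᵥ b) t := by
    simpa using (hasDerivAt_id t).smul_const (nullProj A *ᵥ b)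
  have h3 := (h1.add h2).sub_const (pinv A *ᵥ b)
  have heq : A *ᵥ cand A b x₀ t + b = (A * mexp (t • A)) *ᵥ v + nullProj A *ᵥ b := by
    have hAP : A *ᵥ (t • (nullProj A *ᵥ b)) = 0 := by
      rw [Matrix.mulVec_smul, Matrix.mulVec_mulVec, A_mul_nullProj hA, Matrix.zero_mulVec,
        smul_zero]
    rw [cand, Matrix.mulVec_sub, Matrix.mulVec_add, hAP, Matrix.mulVec_mulVec,
      Matrix.mulVec_mulVec, nullProj, Matrix.sub_mulVec, Matrix.one_mulVec, ← hv]
    abel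
  rw [heq]
  exact h3

theorem sol_unique {A : Matrix (Fin n) (Fin n) ℝ} (hA : A.IsSymm)
    {b x₀ : Fin n → ℝ} {x : ℝ → (Fin n → ℝ)}
    (hx0 : x 0 = x₀) (hx : ∀ t : ℝ, HasDerivAt x (A *ᵥ x t + b) t) (t : ℝ) :
    x t = cand A b x₀ t := by
  set c := cand A b x₀ with hc
  have hcd : ∀ s : ℝ, HasDerivAt c (A *ᵥ c s + b) s := cand_hasDerivAt hA b x₀
  set d := fun s => x s - c s with hd
  have hdd : ∀ s : ℝ, HasDerivAt d (A *ᵥ d s) s := by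
    intro s
    have := (hx s).sub (hcd s)
    have heq : A *ᵥ x s + b - (A *ᵥ c s + b) = A *ᵥ d s := by
      rw [hd, Matrix.mulVec_sub]
      abel
    rwa [heq] at this
  set g := fun s => mexp (-(s • A)) *ᵥ d s with hg
  have hgd : ∀ s : ℝ, HasDerivAt g 0 s := by
    intro s
    have hcm : HasDerivAt (fun u : ℝ => mulVecCLM n (mexp (-(u • A))))
        (mulVecCLM n (-(A * mexp (-(s • A))))) s :=
      (mulVecCLM n).hasFDerivAt.comp_hasDerivAt s (hasDerivAt_mexp_neg_smul A s)
    have h := hcm.clm_apply (hdd s)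
    have hval : mulVecCLM n (-(A * mexp (-(s • A)))) (d s)
        + mulVecCLM n (mexp (-(s • A))) (A *ᵥ d s) = 0 := by
      simp only [mulVecCLM_apply]
      have hcomm : mexp (-(s • A)) * A = A * mexp (-(s • A)) :=
        (commute_mexp A (-(s • A)) (Commute.neg_right (Commute.smul_right (Commute.refl A) s))).symm
      rw [Matrix.neg_mulVec, Matrix.mulVec_mulVec, hcomm, neg_add_cancel]
    rw [hval] at h
    exact h
  have hg0 : ∀ s : ℝ, g s = g 0 := by
    intro s
    exact is_const_of_deriv_eq_zero (fun u => (hgd u).differentiableAt)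
      (fun u => (hgd u).deriv) s 0
  have hgz : g t = 0 := by
    rw [hg0 t]
    have : d 0 = 0 := by
      simp [hd, hx0, hc, cand_zero]
    simp [hg, this]
  have hdz : d t = 0 := by
    have h1 : mexp (t • A) *ᵥ g t = d t := by
      rw [hg, Matrix.mulVec_mulVec, mexp_mul_mexp_neg, Matrix.one_mulVec]
    rw [hgz, Matrix.mulVec_zero] at h1
    exact h1.symm
  have := sub_eq_zero.mp hdz
  exact this

end Stmt0Aux

/-- The unique solution of `ẋ = A x + b`, `x(0) = x₀` (`A` symmetric) is
`x(t) = e^{At}(x₀ + A⁺b) + t P_A b − A⁺ b`. -/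
theorem stmt0 {n : ℕ} (A : Matrix (Fin n) (Fin n) ℝ) (hA : A.IsSymm)
    (b x₀ : Fin n → ℝ) (x : ℝ → (Fin n → ℝ)) :
    (x 0 = x₀ ∧ ∀ t : ℝ, HasDerivAt x (A *ᵥ x t + b) t) ↔
      ∀ t : ℝ, x t = mexp (t • A) *ᵥ (x₀ + pinv A *ᵥ b) + t • (nullProj A *ᵥ b) - pinv A *ᵥ b := by
  constructor
  · rintro ⟨hx0, hx⟩ t
    exact sol_unique hA hx0 hx t
  · intro h
    have hx : x = cand A b x₀ := funext h
    subst hx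
    exact ⟨cand_zero A b x₀, fun t => cand_hasDerivAt hA b x₀ t⟩
end

section
/- Let A ∈ ℝ^{n×n} be symmetric, b, x₀ ∈ ℝⁿ, let f(x) = ½ xᵀ A x + bᵀ x, and let x(t) = e^{At} y + t P_A b − A⁺ b where y = x₀ + A⁺ b. Then for all t ∈ ℝ, f(x(t)) = ½ (yᵀ A e^{2At} y − bᵀ A⁺ b) + t bᵀ P_A b + yᵀ P_A b. -/
open Matrix MeasureTheory ProbabilityTheory
open scoped Classical

section Helpers
open Matrix NormedSpace

theorem pinv_uniq {n : ℕ} (A B₁ B₂ : Matrix (Fin n) (Fin n) ℝ)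
    (h1 : A * B₁ * A = A) (h2 : B₁ * A * B₁ = B₁) (h3 : (A * B₁)ᵀ = A * B₁)
    (h4 : (B₁ * A)ᵀ = B₁ * A)
    (k1 : A * B₂ * A = A) (k2 : B₂ * A * B₂ = B₂) (k3 : (A * B₂)ᵀ = A * B₂)
    (k4 : (B₂ * A)ᵀ = B₂ * A) : B₁ = B₂ := by
  have hAB : A * B₁ = A * B₂ := by
    calc A * B₁ = (A * B₂ * A) * B₁ := by rw [k1]
    _ = (A * B₂) * (A * B₁) := by noncomm_ring
    _ = (A * B₂)ᵀ * (A * B₁)ᵀ := by rw [k3, h3]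
    _ = ((A * B₁) * (A * B₂))ᵀ := (transpose_mul (A * B₁) (A * B₂)).symm
    _ = ((A * B₁ * A) * B₂)ᵀ := by noncomm_ring
    _ = (A * B₂)ᵀ := by rw [h1]
    _ = A * B₂ := k3
  have hBA : B₁ * A = B₂ * A := by
    calc B₁ * A = B₁ * (A * B₂ * A) := by rw [k1]
    _ = (B₁ * A) * (B₂ * A) := by noncomm_ring
    _ = (B₁ * A)ᵀ * (B₂ * A)ᵀ := by rw [h4, k4]
    _ = ((B₂ * A) * (B₁ * A))ᵀ := (transpose_mul (B₂ * A) (B₁ * A)).symm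
    _ = (B₂ * (A * B₁ * A))ᵀ := by noncomm_ring
    _ = (B₂ * A)ᵀ := by rw [h1]
    _ = B₂ * A := k4
  calc B₁ = B₁ * A * B₁ := h2.symm
  _ = B₂ * A * B₁ := by rw [hBA]
  _ = B₂ * (A * B₁) := by rw [mul_assoc]
  _ = B₂ * (A * B₂) := by rw [hAB]
  _ = B₂ * A * B₂ := by rw [mul_assoc]
  _ = B₂ := k2

theorem exists_pinv_symm {n : ℕ} (A : Matrix (Fin n) (Fin n) ℝ) (hA : A.IsSymm) :
    ∃ B : Matrix (Fin n) (Fin n) ℝ,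
      (A * B * A = A ∧ B * A * B = B ∧ (A * B)ᵀ = A * B ∧ (B * A)ᵀ = B * A) ∧ Bᵀ = B := by
  have hH : A.IsHermitian := by
    rw [Matrix.IsHermitian, Matrix.conjTranspose_eq_transpose_of_trivial]; exact hA
  set U : Matrix (Fin n) (Fin n) ℝ := (hH.eigenvectorUnitary : Matrix (Fin n) (Fin n) ℝ) with hUdef
  set d : Fin n → ℝ := hH.eigenvalues with hddef
  have hU2 : star U * U = 1 := (Matrix.mem_unitaryGroup_iff').mp hH.eigenvectorUnitary.2
  have hAeq : A = U * diagonal d * star U := by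
    have := hH.spectral_theorem
    simpa [hUdef, hddef, Function.comp, RCLike.ofReal_real_eq_id] using this
  have hstar : star U = Uᵀ := Matrix.conjTranspose_eq_transpose_of_trivial U
  have hconj : ∀ X Y : Matrix (Fin n) (Fin n) ℝ,
      (U * X * star U) * (U * Y * star U) = U * (X * Y) * star U := by
    intro X Y
    have h : (U * X * star U) * (U * Y * star U) = U * X * (star U * U) * Y * star U := by
      noncomm_ring
    rw [h, hU2, mul_one, mul_assoc U X Y]
  have htr : ∀ v : Fin n → ℝ, (U * diagonal v * star U)ᵀ = U * diagonal v * star U := by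
    intro v
    rw [hstar, transpose_mul, transpose_mul, transpose_transpose, diagonal_transpose]
    noncomm_ring
  have hd1 : (fun i => d i * (d i)⁻¹ * d i) = d := by
    funext i; rcases eq_or_ne (d i) 0 with h | h
    · simp [h]
    · field_simp
  have hd2 : (fun i => (d i)⁻¹ * d i * (d i)⁻¹) = fun i => (d i)⁻¹ := by
    funext i; rcases eq_or_ne (d i) 0 with h | h
    · simp [h]
    · field_simp
  refine ⟨U * diagonal (fun i => (d i)⁻¹) * star U, ⟨?_, ?_, ?_, ?_⟩, htr _⟩
  · rw [hAeq, hconj, hconj, diagonal_mul_diagonal, diagonal_mul_diagonal, hd1]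
  · rw [hAeq, hconj, hconj, diagonal_mul_diagonal, diagonal_mul_diagonal, hd2]
  · rw [hAeq, hconj, diagonal_mul_diagonal]; exact htr _
  · rw [hAeq, hconj, diagonal_mul_diagonal]; exact htr _


theorem pinv_spec {n : ℕ} {A : Matrix (Fin n) (Fin n) ℝ} (hA : A.IsSymm) :
    (A * pinv A * A = A ∧ pinv A * A * pinv A = pinv A ∧ (A * pinv A)ᵀ = A * pinv A ∧
      (pinv A * A)ᵀ = pinv A * A) ∧ (pinv A)ᵀ = pinv A := by
  obtain ⟨B₀, hB₀, hB₀t⟩ := exists_pinv_symm A hA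
  have hex : ∃ B : Matrix (Fin n) (Fin n) ℝ,
      A * B * A = A ∧ B * A * B = B ∧ (A * B)ᵀ = A * B ∧ (B * A)ᵀ = B * A := ⟨B₀, hB₀⟩
  have hp : pinv A = hex.choose := by unfold pinv; rw [dif_pos hex]
  have hs := hex.choose_spec
  rw [← hp] at hs
  have hpb : pinv A = B₀ :=
    pinv_uniq A (pinv A) B₀ hs.1 hs.2.1 hs.2.2.1 hs.2.2.2 hB₀.1 hB₀.2.1 hB₀.2.2.1 hB₀.2.2.2
  exact ⟨hs, by rw [hpb]; exact hB₀t⟩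

theorem mexp_mul_eq_self {n : ℕ} (M C : Matrix (Fin n) (Fin n) ℝ) (h : M * C = 0) :
    mexp M * C = C := by
  letI : SeminormedRing (Matrix (Fin n) (Fin n) ℝ) := Matrix.linftyOpSemiNormedRing
  letI : NormedRing (Matrix (Fin n) (Fin n) ℝ) := Matrix.linftyOpNormedRing
  letI : NormedAlgebra ℝ (Matrix (Fin n) (Fin n) ℝ) := Matrix.linftyOpNormedAlgebra
  rw [mexp, exp_eq_tsum (𝕂 := ℝ)]
  beta_reduce
  refine Eq.trans ((expSeries_summable' (𝕂 := ℝ) M).tsum_mul_right C).symm ?_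
  rw [tsum_eq_single 0 ?_]
  · simp
  · intro k hk
    obtain ⟨j, rfl⟩ := Nat.exists_eq_succ_of_ne_zero hk
    rw [smul_mul_assoc, pow_succ, mul_assoc, h, mul_zero, smul_zero]

theorem mexp_comm {n : ℕ} (t : ℝ) (A : Matrix (Fin n) (Fin n) ℝ) :
    A * mexp (t • A) = mexp (t • A) * A := by
  have h : Commute A (t • A) := (Commute.refl A).smul_right t
  exact (h.exp_right)

theorem mexp_sq {n : ℕ} (t : ℝ) (A : Matrix (Fin n) (Fin n) ℝ) :
    mexp (t • A) * mexp (t • A) = mexp ((2 * t) • A) := by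
  simp only [mexp]
  rw [two_mul, add_smul, Matrix.exp_add_of_commute (t • A) (t • A) (Commute.refl _)]

theorem mexp_transpose {n : ℕ} (t : ℝ) (A : Matrix (Fin n) (Fin n) ℝ) (hA : A.IsSymm) :
    (mexp (t • A))ᵀ = mexp (t • A) := by
  rw [mexp, ← Matrix.exp_transpose, transpose_smul, hA]




theorem dotT {n : ℕ} (M : Matrix (Fin n) (Fin n) ℝ) (u v : Fin n → ℝ) :
    (M *ᵥ u) ⬝ᵥ v = u ⬝ᵥ (Mᵀ *ᵥ v) := by
  rw [Matrix.dotProduct_mulVec, Matrix.vecMul_transpose]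

theorem dotSym {n : ℕ} (M : Matrix (Fin n) (Fin n) ℝ) (h : Mᵀ = M) (u v : Fin n → ℝ) :
    u ⬝ᵥ (M *ᵥ v) = v ⬝ᵥ (M *ᵥ u) := by
  calc u ⬝ᵥ (M *ᵥ v) = u ⬝ᵥ (Mᵀᵀ *ᵥ v) := by rw [transpose_transpose]
  _ = (Mᵀ *ᵥ u) ⬝ᵥ v := (dotT Mᵀ u v).symm
  _ = v ⬝ᵥ (Mᵀ *ᵥ u) := dotProduct_comm _ _
  _ = v ⬝ᵥ (M *ᵥ u) := by rw [h]

theorem key {n : ℕ} (t : ℝ) (A E E2 B P : Matrix (Fin n) (Fin n) ℝ) (b y : Fin n → ℝ)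
    (hEt : Eᵀ = E) (h3 : (A * B)ᵀ = A * B)
    (hPt : Pᵀ = P) (hPdef : P = 1 - A * B)
    (hAP : A * P = 0) (hPA : P * A = 0)
    (hEE : E * (A * E) = A * E2)
    (hEAB : E * (A * B) = E - 1 + A * B) (hABE : (A * B) * E = E - 1 + A * B)
    (hBAE : B * (A * E) = E - 1 + A * B) (hBAB : B * (A * B) = B) (hBt : Bᵀ = B) :
    (1 / 2) * ((E *ᵥ y + t • (P *ᵥ b) - B *ᵥ b) ⬝ᵥ (A *ᵥ (E *ᵥ y + t • (P *ᵥ b) - B *ᵥ b)))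
      + b ⬝ᵥ (E *ᵥ y + t • (P *ᵥ b) - B *ᵥ b)
    = (1 / 2) * (y ⬝ᵥ ((A * E2) *ᵥ y) - b ⬝ᵥ (B *ᵥ b)) + t * (b ⬝ᵥ (P *ᵥ b))
      + y ⬝ᵥ (P *ᵥ b) := by
  have hAx : A *ᵥ (E *ᵥ y + t • (P *ᵥ b) - B *ᵥ b) = (A * E) *ᵥ y - (A * B) *ᵥ b := by
    rw [Matrix.mulVec_sub, Matrix.mulVec_add, Matrix.mulVec_smul, Matrix.mulVec_mulVec,
      Matrix.mulVec_mulVec, Matrix.mulVec_mulVec, hAP, Matrix.zero_mulVec, smul_zero, add_zero]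
  have expand : ∀ M : Matrix (Fin n) (Fin n) ℝ, M = E - 1 + A * B →
      y ⬝ᵥ (M *ᵥ b) = b ⬝ᵥ (E *ᵥ y) - b ⬝ᵥ y + b ⬝ᵥ ((A * B) *ᵥ y) := by
    rintro M rfl
    rw [Matrix.add_mulVec, Matrix.sub_mulVec, Matrix.one_mulVec, dotProduct_add, dotProduct_sub,
      dotSym E hEt y b, dotProduct_comm y b, dotSym (A * B) h3 y b]
  have hT1 : (E *ᵥ y) ⬝ᵥ ((A * E) *ᵥ y) = y ⬝ᵥ ((A * E2) *ᵥ y) := by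
    rw [dotT, Matrix.mulVec_mulVec, hEt, hEE]
  have hT2 : (E *ᵥ y) ⬝ᵥ ((A * B) *ᵥ b)
      = b ⬝ᵥ (E *ᵥ y) - b ⬝ᵥ y + b ⬝ᵥ ((A * B) *ᵥ y) := by
    rw [dotT, Matrix.mulVec_mulVec, hEt]
    exact expand _ hEAB
  have hT3 : (P *ᵥ b) ⬝ᵥ ((A * E) *ᵥ y) = 0 := by
    rw [dotT, Matrix.mulVec_mulVec, hPt, ← mul_assoc, hPA, zero_mul, Matrix.zero_mulVec,
      dotProduct_zero]
  have hT4 : (P *ᵥ b) ⬝ᵥ ((A * B) *ᵥ b) = 0 := by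
    rw [dotT, Matrix.mulVec_mulVec, hPt, ← mul_assoc, hPA, zero_mul, Matrix.zero_mulVec,
      dotProduct_zero]
  have hT5 : (B *ᵥ b) ⬝ᵥ ((A * E) *ᵥ y)
      = b ⬝ᵥ (E *ᵥ y) - b ⬝ᵥ y + b ⬝ᵥ ((A * B) *ᵥ y) := by
    rw [dotT, Matrix.mulVec_mulVec, hBt, hBAE, Matrix.add_mulVec, Matrix.sub_mulVec,
      Matrix.one_mulVec, dotProduct_add, dotProduct_sub]
  have hT6 : (B *ᵥ b) ⬝ᵥ ((A * B) *ᵥ b) = b ⬝ᵥ (B *ᵥ b) := by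
    rw [dotT, Matrix.mulVec_mulVec, hBt, hBAB]
  have hyP : y ⬝ᵥ (P *ᵥ b) = b ⬝ᵥ y - b ⬝ᵥ ((A * B) *ᵥ y) := by
    rw [hPdef, Matrix.sub_mulVec, Matrix.one_mulVec, dotProduct_sub, dotProduct_comm y b,
      dotSym (A * B) h3 y b]
  rw [hAx]
  simp only [dotProduct_sub, dotProduct_add, sub_dotProduct, add_dotProduct, smul_dotProduct,
    dotProduct_smul, smul_eq_mul, hT1, hT2, hT3, hT4, hT5, hT6, hyP]
  ring


end Helpers

/-- Value of the quadratic potential along the solution curve. -/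
theorem stmt1 {n : ℕ} (A : Matrix (Fin n) (Fin n) ℝ) (hA : A.IsSymm) (b x₀ y : Fin n → ℝ)
    (hy : y = x₀ + pinv A *ᵥ b) (x : ℝ → (Fin n → ℝ))
    (hx : ∀ t : ℝ, x t = mexp (t • A) *ᵥ y + t • (nullProj A *ᵥ b) - pinv A *ᵥ b) :
    ∀ t : ℝ, quadf A b (x t) =
      (1 / 2) * (y ⬝ᵥ ((A * mexp ((2 * t) • A)) *ᵥ y) - b ⬝ᵥ (pinv A *ᵥ b))
        + t * (b ⬝ᵥ (nullProj A *ᵥ b)) + y ⬝ᵥ (nullProj A *ᵥ b) := by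
  
  intro t
  obtain ⟨⟨h1, h2, h3, h4⟩, hBt⟩ := pinv_spec hA
  have hAt : Aᵀ = A := hA
  have hABA : A * (A * pinv A) = A := by
    calc A * (A * pinv A) = Aᵀ * (A * pinv A)ᵀ := by rw [hAt, h3]
    _ = ((A * pinv A) * A)ᵀ := (transpose_mul _ _).symm
    _ = Aᵀ := by rw [h1]
    _ = A := hAt
  have hPdef : nullProj A = 1 - A * pinv A := rfl
  have hAP : A * nullProj A = 0 := by rw [hPdef, mul_sub, mul_one, hABA, sub_self]
  have hPA : nullProj A * A = 0 := by rw [hPdef, sub_mul, one_mul, h1, sub_self]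
  have hPt : (nullProj A)ᵀ = nullProj A := by rw [hPdef, transpose_sub, transpose_one, h3]
  have htAP : (t • A) * nullProj A = 0 := by rw [smul_mul_assoc, hAP, smul_zero]
  have hEP : mexp (t • A) * nullProj A = nullProj A := mexp_mul_eq_self _ _ htAP
  have hEt : (mexp (t • A))ᵀ = mexp (t • A) := mexp_transpose t A hA
  have hEAB : mexp (t • A) * (A * pinv A) = mexp (t • A) - 1 + A * pinv A := by
    have h' := hEP
    rw [hPdef, mul_sub, mul_one] at h'
    calc mexp (t • A) * (A * pinv A)
        = mexp (t • A) - (mexp (t • A) - mexp (t • A) * (A * pinv A)) := by abel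
    _ = mexp (t • A) - (1 - A * pinv A) := by rw [h']
    _ = mexp (t • A) - 1 + A * pinv A := by abel
  have hBA : pinv A * A = A * pinv A := by
    calc pinv A * A = (pinv A * A)ᵀ := h4.symm
    _ = Aᵀ * (pinv A)ᵀ := transpose_mul _ _
    _ = A * pinv A := by rw [hAt, hBt]
  have hABE : (A * pinv A) * mexp (t • A) = mexp (t • A) - 1 + A * pinv A := by
    have h5 := congrArg Matrix.transpose hEAB
    rwa [transpose_mul, hEt, h3, transpose_add, transpose_sub, transpose_one, hEt, h3] at h5
  have hBAE : pinv A * (A * mexp (t • A)) = mexp (t • A) - 1 + A * pinv A := by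
    rw [← mul_assoc, hBA, hABE]
  have hBAB : pinv A * (A * pinv A) = pinv A := by rw [← mul_assoc]; exact h2
  have hEE : mexp (t • A) * (A * mexp (t • A)) = A * mexp ((2 * t) • A) := by
    rw [← mul_assoc, ← mexp_comm t A, mul_assoc, mexp_sq]
  rw [hx t]
  simp only [quadf]
  exact key t A (mexp (t • A)) (mexp ((2 * t) • A)) (pinv A) (nullProj A) b y hEt h3 hPt hPdef
    hAP hPA hEE hEAB hABE hBAE hBAB hBt
end

section
/- For every symmetric matrix A ∈ ℝ^{n×n}, the matrix M = 2A e^{2A} − e^{2A} + I is symmetric positive semidefinite. -/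
open Matrix MeasureTheory ProbabilityTheory
open scoped Classical

lemma scalar_nonneg (x : ℝ) : 0 ≤ 2 * x * Real.exp (2 * x) - Real.exp (2 * x) + 1 := by
  set u := 2 * x with hu
  have h1 : (-u) + 1 ≤ Real.exp (-u) := Real.add_one_le_exp _
  have h2 : Real.exp (-u) * Real.exp u = 1 := by rw [← Real.exp_add]; simp
  have h3 : (0:ℝ) < Real.exp u := Real.exp_pos u
  nlinarith [mul_le_mul_of_nonneg_right h1 h3.le]

lemma conj_mul_conj {n : ℕ} (U X Y : Matrix (Fin n) (Fin n) ℝ) (h : star U * U = 1) :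
    (U * X * star U) * (U * Y * star U) = U * (X * Y) * star U := by
  calc (U * X * star U) * (U * Y * star U)
      = U * X * (star U * U) * Y * star U := by noncomm_ring
    _ = U * (X * Y) * star U := by rw [h]; noncomm_ring

lemma smul_conj {n : ℕ} (c : ℝ) (U X : Matrix (Fin n) (Fin n) ℝ) :
    c • (U * X * star U) = U * (c • X) * star U := by
  rw [Matrix.mul_smul, Matrix.smul_mul]

/-- For symmetric `A`, the matrix `M = 2A e^{2A} − e^{2A} + I` is
symmetric positive semidefinite. -/
theorem stmt3 {n : ℕ} (A : Matrix (Fin n) (Fin n) ℝ) (hA : A.IsSymm) :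
    ((2 : ℝ) • (A * mexp ((2 : ℝ) • A)) - mexp ((2 : ℝ) • A) + 1).PosSemidef := by
  have hH : A.IsHermitian := by
    rwa [Matrix.IsHermitian, Matrix.conjTranspose_eq_transpose_of_trivial]
  set U : Matrix (Fin n) (Fin n) ℝ := (hH.eigenvectorUnitary : Matrix (Fin n) (Fin n) ℝ) with hUdef
  set d : Fin n → ℝ := hH.eigenvalues with hddef
  have hU1 : U * star U = 1 := Matrix.mem_unitaryGroup_iff.mp hH.eigenvectorUnitary.2
  have hU2 : star U * U = 1 := Matrix.mem_unitaryGroup_iff'.mp hH.eigenvectorUnitary.2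
  have hUunit : IsUnit U := ⟨⟨U, star U, hU1, hU2⟩, rfl⟩
  have hUinv : U⁻¹ = star U := Matrix.inv_eq_right_inv hU1
  have hspec : A = U * Matrix.diagonal d * star U := by
    have := hH.spectral_theorem
    simpa using this
  have h2A : (2 : ℝ) • A = U * Matrix.diagonal (fun i => 2 * d i) * star U := by
    rw [hspec, smul_conj, ← Matrix.diagonal_smul]
    rfl
  have hexp : mexp ((2 : ℝ) • A) = U * Matrix.diagonal (fun i => Real.exp (2 * d i)) * star U := by
    rw [mexp, h2A, ← hUinv, Matrix.exp_conj U _ hUunit, Matrix.exp_diagonal]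
    congr 2
    rw [Pi.exp_def]
    funext i
    simp [Real.exp_eq_exp_ℝ]
  have hone : (1 : Matrix (Fin n) (Fin n) ℝ) = U * Matrix.diagonal (fun _ => (1:ℝ)) * star U := by
    rw [Matrix.diagonal_one, Matrix.mul_one, hU1]
  have key : (2 : ℝ) • (A * mexp ((2 : ℝ) • A)) - mexp ((2 : ℝ) • A) + 1
      = U * Matrix.diagonal (fun i => 2 * d i * Real.exp (2 * d i) - Real.exp (2 * d i) + 1)
        * star U := by
    rw [hexp, hspec, conj_mul_conj _ _ _ hU2, Matrix.diagonal_mul_diagonal, smul_conj, hone,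
      ← Matrix.sub_mul, ← Matrix.mul_sub, ← Matrix.add_mul, ← Matrix.mul_add,
      ← Matrix.diagonal_smul, Matrix.diagonal_sub, Matrix.diagonal_add]
    congr 2
    funext i j
    by_cases h : i = j
    · subst h
      simp only [Matrix.diagonal_apply_eq, Pi.add_apply, Pi.sub_apply, Pi.smul_apply,
        smul_eq_mul, Pi.one_apply]
      ring
    · rw [Matrix.diagonal_apply_ne _ h, Matrix.diagonal_apply_ne _ h]
  rw [key]
  have hdiag : (Matrix.diagonal
      (fun i => 2 * d i * Real.exp (2 * d i) - Real.exp (2 * d i) + 1)).PosSemidef :=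
    Matrix.posSemidef_diagonal_iff.mpr fun i => scalar_nonneg (d i)
  simpa [Matrix.star_eq_conjTranspose] using hdiag.mul_mul_conjTranspose_same U
end

section
/- For every symmetric matrix A ∈ ℝ^{n×n}, the matrix (e^{A} − I) A⁺ + P_A is invertible. -/
open Matrix MeasureTheory ProbabilityTheory
open scoped Classical

/-- Uniqueness of the Moore–Penrose pseudoinverse. -/
lemma mp_unique {n : ℕ} (A B C : Matrix (Fin n) (Fin n) ℝ)
    (hB : A * B * A = A ∧ B * A * B = B ∧ (A * B)ᵀ = A * B ∧ (B * A)ᵀ = B * A)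
    (hC : A * C * A = A ∧ C * A * C = C ∧ (A * C)ᵀ = A * C ∧ (C * A)ᵀ = C * A) :
    B = C := by
  obtain ⟨hB1, hB2, hB3, hB4⟩ := hB
  obtain ⟨hC1, hC2, hC3, hC4⟩ := hC
  have hAB : A * B = A * C := by
    calc A * B = (A * B)ᵀ := hB3.symm
    _ = Bᵀ * Aᵀ := by rw [Matrix.transpose_mul]
    _ = Bᵀ * (A * C * A)ᵀ := by rw [hC1]
    _ = Bᵀ * (Aᵀ * (A * C)ᵀ) := by rw [Matrix.transpose_mul]
    _ = Bᵀ * (Aᵀ * (A * C)) := by rw [hC3]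
    _ = (Bᵀ * Aᵀ) * (A * C) := by rw [mul_assoc]
    _ = (A * B)ᵀ * (A * C) := by rw [Matrix.transpose_mul]
    _ = (A * B) * (A * C) := by rw [hB3]
    _ = (A * B * A) * C := by simp only [mul_assoc]
    _ = A * C := by rw [hB1]
  have hBA : B * A = C * A := by
    calc B * A = (B * A)ᵀ := hB4.symm
    _ = Aᵀ * Bᵀ := by rw [Matrix.transpose_mul]
    _ = (A * C * A)ᵀ * Bᵀ := by rw [hC1]
    _ = ((C * A)ᵀ * Aᵀ) * Bᵀ := by
        rw [mul_assoc, Matrix.transpose_mul, Matrix.transpose_mul]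
    _ = ((C * A) * Aᵀ) * Bᵀ := by rw [hC4]
    _ = (C * A) * (Aᵀ * Bᵀ) := by rw [mul_assoc]
    _ = (C * A) * (B * A)ᵀ := by rw [Matrix.transpose_mul]
    _ = (C * A) * (B * A) := by rw [hB4]
    _ = C * (A * B * A) := by simp only [mul_assoc]
    _ = C * A := by rw [hB1]
  calc B = B * A * B := hB2.symm
  _ = C * A * B := by rw [hBA]
  _ = C * (A * B) := by rw [mul_assoc]
  _ = C * (A * C) := by rw [hAB]
  _ = C * A * C := by rw [mul_assoc]
  _ = C := hC2

lemma pinv_eq {n : ℕ} (A B : Matrix (Fin n) (Fin n) ℝ)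
    (hB : A * B * A = A ∧ B * A * B = B ∧ (A * B)ᵀ = A * B ∧ (B * A)ᵀ = B * A) :
    pinv A = B := by
  have hex : ∃ B : Matrix (Fin n) (Fin n) ℝ,
      A * B * A = A ∧ B * A * B = B ∧ (A * B)ᵀ = A * B ∧ (B * A)ᵀ = B * A := ⟨B, hB⟩
  rw [pinv, dif_pos hex]
  exact mp_unique A _ B hex.choose_spec hB

/-- For symmetric `A`, the matrix `(e^A − I) A⁺ + P_A` is invertible. -/
theorem stmt4 {n : ℕ} (A : Matrix (Fin n) (Fin n) ℝ) (hA : A.IsSymm) :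
    IsUnit ((mexp A - 1) * pinv A + nullProj A) := by
  have hA' : A.IsHermitian := by
    rwa [Matrix.IsHermitian, Matrix.conjTranspose_eq_transpose_of_trivial]
  set U : Matrix (Fin n) (Fin n) ℝ := (hA'.eigenvectorUnitary : Matrix (Fin n) (Fin n) ℝ)
    with hUdef
  have hU1 : U * star U = 1 := Matrix.mem_unitaryGroup_iff.mp (hA'.eigenvectorUnitary).2
  have hU2 : star U * U = 1 := Matrix.mem_unitaryGroup_iff'.mp (hA'.eigenvectorUnitary).2
  set d : Fin n → ℝ := hA'.eigenvalues with hddef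
  have hspec : A = U * Matrix.diagonal d * star U := by
    have h := hA'.spectral_theorem
    have : (RCLike.ofReal ∘ hA'.eigenvalues : Fin n → ℝ) = d := by ext i; simp [hddef]
    rwa [this] at h
  -- conjugation helpers
  have hmul : ∀ X Y : Matrix (Fin n) (Fin n) ℝ,
      (U * X * star U) * (U * Y * star U) = U * (X * Y) * star U := by
    intro X Y
    have h1 : star U * (U * (Y * star U)) = Y * star U := by
      rw [← mul_assoc, hU2, one_mul]
    simp only [mul_assoc, h1]
  have htrans : ∀ v : Fin n → ℝ,
      (U * Matrix.diagonal v * star U)ᵀ = U * Matrix.diagonal v * star U := by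
    intro v
    rw [Matrix.star_eq_conjTranspose, Matrix.conjTranspose_eq_transpose_of_trivial,
      Matrix.transpose_mul, Matrix.transpose_mul, Matrix.transpose_transpose,
      Matrix.diagonal_transpose, mul_assoc]
  have hone : U * Matrix.diagonal (1 : Fin n → ℝ) * star U = 1 := by
    have h1 : Matrix.diagonal (1 : Fin n → ℝ) = (1 : Matrix (Fin n) (Fin n) ℝ) := by
      ext i j
      by_cases h : i = j <;> simp [Matrix.diagonal, Matrix.one_apply, h]
    rw [h1, mul_one, hU1]
  -- the explicit pseudoinverse
  set g : Fin n → ℝ := fun i => if d i = 0 then 0 else (d i)⁻¹ with hgdef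
  have hdg : ∀ i, d i * g i * d i = d i := by
    intro i
    by_cases h : d i = 0 <;> simp [hgdef, h]
  have hgd : ∀ i, g i * d i * g i = g i := by
    intro i
    by_cases h : d i = 0 <;> simp [hgdef, h]
  have hcomm : (fun i => d i * g i) = fun i => g i * d i := by
    ext i; ring
  set B : Matrix (Fin n) (Fin n) ℝ := U * Matrix.diagonal g * star U with hBdef
  have hpinv : pinv A = B := by
    apply pinv_eq
    refine ⟨?_, ?_, ?_, ?_⟩
    · rw [hspec, hBdef, hmul, hmul, Matrix.diagonal_mul_diagonal,
        Matrix.diagonal_mul_diagonal]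
      have h2 : (fun i => d i * g i * d i) = d := funext fun i => hdg i
      rw [h2]
    · rw [hspec, hBdef, hmul, hmul, Matrix.diagonal_mul_diagonal,
        Matrix.diagonal_mul_diagonal]
      have h2 : (fun i => g i * d i * g i) = g := funext fun i => hgd i
      rw [h2]
    · rw [hspec, hBdef, hmul, Matrix.diagonal_mul_diagonal]
      exact htrans _
    · rw [hspec, hBdef, hmul, Matrix.diagonal_mul_diagonal]
      exact htrans _
  -- the exponential
  have hUunit : IsUnit U := ⟨⟨U, star U, hU1, hU2⟩, rfl⟩
  have hUinv : U⁻¹ = star U := Matrix.inv_eq_left_inv hU2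
  have hexp : mexp A = U * Matrix.diagonal (fun i => Real.exp (d i)) * star U := by
    rw [mexp, hspec, ← hUinv, Matrix.exp_conj U (Matrix.diagonal d) hUunit, Matrix.exp_diagonal, hUinv]
    congr 2
    rw [Pi.exp_def]
    have h3 : (fun i => NormedSpace.exp (d i)) = fun i => Real.exp (d i) :=
      funext fun i => (congrFun Real.exp_eq_exp_ℝ (d i)).symm
    rw [h3]
  -- combine everything
  set f : Fin n → ℝ := fun i => (Real.exp (d i) - 1) * g i + (1 - d i * g i) with hfdef
  have hkey : (mexp A - 1) * pinv A + nullProj A = U * Matrix.diagonal f * star U := by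
    rw [hpinv, nullProj, hpinv, hexp, hBdef]
    rw [show (A : Matrix (Fin n) (Fin n) ℝ) = U * Matrix.diagonal d * star U from hspec]
    rw [← hone]
    rw [← Matrix.sub_mul, ← Matrix.mul_sub, hmul, hmul, ← Matrix.sub_mul, ← Matrix.mul_sub,
      ← Matrix.add_mul, ← Matrix.mul_add]
    congr 2
    rw [Matrix.diagonal_sub, Matrix.diagonal_mul_diagonal, Matrix.diagonal_mul_diagonal,
      Matrix.diagonal_sub, Matrix.diagonal_add]
    have h4 : (fun i => (Real.exp (d i) - (1 : Fin n → ℝ) i) * g i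
        + ((1 : Fin n → ℝ) i - d i * g i)) = f := funext fun i => by simp [hfdef]
    rw [h4]
  rw [hkey]
  have hfne : ∀ i, f i ≠ 0 := by
    intro i
    by_cases h : d i = 0
    · simp [hfdef, hgdef, h]
    · have he : Real.exp (d i) ≠ 1 := by
        intro hc
        exact h (Real.exp_injective (by rw [hc, Real.exp_zero]))
      simp only [hfdef, hgdef, if_neg h]
      field_simp
      intro hc
      rcases div_eq_zero_iff.mp hc with hc | hc
      · exact he (by linarith)
      · exact h hc
  have hfunit : IsUnit (Matrix.diagonal f) := by
    apply (Matrix.isUnit_iff_isUnit_det _).mpr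
    rw [Matrix.det_diagonal, isUnit_iff_ne_zero]
    exact Finset.prod_ne_zero_iff.mpr fun i _ => hfne i
  have hsUunit : IsUnit (star U) := ⟨⟨star U, U, hU2, hU1⟩, rfl⟩
  exact (hUunit.mul hfunit).mul hsUunit
end

section
/- Let Σ₀, Σ₁ ∈ ℝ^{n×n} be symmetric positive definite. Then X = Σ₀^{-1/2} (Σ₀^{1/2} Σ₁ Σ₀^{1/2})^{1/2} Σ₀^{-1/2} is the unique symmetric positive definite solution of the matrix equation X Σ₀ X = Σ₁. -/
open Matrix MeasureTheory ProbabilityTheory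
open scoped Classical

lemma msqrt_spec {n : ℕ} {S : Matrix (Fin n) (Fin n) ℝ} (hS : S.PosSemidef) :
    (msqrt S).PosSemidef ∧ msqrt S * msqrt S = S := by
  have h : ∃ B : Matrix (Fin n) (Fin n) ℝ, B.PosSemidef ∧ B * B = S :=
    by open scoped MatrixOrder in
      exact ⟨CFC.sqrt S, (CFC.sqrt_nonneg S).posSemidef, CFC.sqrt_mul_sqrt_self S hS.nonneg⟩
  rw [msqrt, dif_pos h]
  exact h.choose_spec

lemma posDef_of_posSemidef_isUnit {n : ℕ} {A : Matrix (Fin n) (Fin n) ℝ}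
    (hA : A.PosSemidef) (hU : IsUnit A) : A.PosDef := by
  exact hA.posDef_iff_isUnit.mpr hU

lemma isUnit_transpose' {n : ℕ} {C : Matrix (Fin n) (Fin n) ℝ} (hC : IsUnit C) : IsUnit Cᵀ := by
  rw [Matrix.isUnit_iff_isUnit_det, Matrix.det_transpose, ← Matrix.isUnit_iff_isUnit_det]
  exact hC

lemma posDef_conj {n : ℕ} {B C : Matrix (Fin n) (Fin n) ℝ}
    (hB : B.PosDef) (hC : IsUnit C) : (Cᵀ * B * C).PosDef := by
  have := hB.posSemidef.conjTranspose_mul_mul_same C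
  rw [conjTranspose_eq_transpose_of_trivial] at this
  exact posDef_of_posSemidef_isUnit this (((isUnit_transpose' hC).mul hB.isUnit).mul hC)


set_option maxHeartbeats 1000000 in
/-- `X = Σ₀^{-1/2}(Σ₀^{1/2} Σ₁ Σ₀^{1/2})^{1/2} Σ₀^{-1/2}` is the unique
symmetric positive definite solution of `X Σ₀ X = Σ₁`. -/
theorem stmt5 {n : ℕ} (S₀ S₁ : Matrix (Fin n) (Fin n) ℝ) (h₀ : S₀.PosDef) (h₁ : S₁.PosDef)
    (X : Matrix (Fin n) (Fin n) ℝ)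
    (hX : X = (msqrt S₀)⁻¹ * msqrt (msqrt S₀ * S₁ * msqrt S₀) * (msqrt S₀)⁻¹) :
    X.PosDef ∧ X * S₀ * X = S₁ ∧
      ∀ Y : Matrix (Fin n) (Fin n) ℝ, Y.PosDef → Y * S₀ * Y = S₁ → Y = X := by
  obtain ⟨hApsd, hAA⟩ := msqrt_spec h₀.posSemidef
  generalize hAg : msqrt S₀ = A at hX hApsd hAA
  have hAU : IsUnit A := by
    rw [Matrix.isUnit_iff_isUnit_det]
    have : A.det * A.det = S₀.det := by rw [← Matrix.det_mul, hAA]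
    have hd : S₀.det ≠ 0 := h₀.det_pos.ne'
    exact isUnit_iff_ne_zero.mpr (fun h => hd (by rw [← this, h, mul_zero]))
  have hApd : A.PosDef := posDef_of_posSemidef_isUnit hApsd hAU
  have hAt : Aᵀ = A := hApsd.1
  have hM : (A * S₁ * A).PosDef := by
    have := posDef_conj h₁ hAU
    rwa [hAt] at this
  obtain ⟨hBpsd, hBB⟩ := msqrt_spec hM.posSemidef
  generalize hBg : msqrt (A * S₁ * A) = B at hX hBpsd hBB
  have hBU : IsUnit B := by
    rw [Matrix.isUnit_iff_isUnit_det]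
    have : B.det * B.det = (A * S₁ * A).det := by rw [← Matrix.det_mul, hBB]
    have hd : (A * S₁ * A).det ≠ 0 := hM.det_pos.ne'
    exact isUnit_iff_ne_zero.mpr (fun h => hd (by rw [← this, h, mul_zero]))
  have hBpd : B.PosDef := posDef_of_posSemidef_isUnit hBpsd hBU
  haveI := hAU.invertible
  have hAit : (A⁻¹)ᵀ = A⁻¹ := by rw [Matrix.transpose_nonsing_inv, hAt]
  have hAiU : IsUnit (A⁻¹ : Matrix (Fin n) (Fin n) ℝ) := Matrix.isUnit_nonsing_inv_iff.mpr hAU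
  have hXpd : X.PosDef := by
    rw [hX]
    have h2 := posDef_conj hBpd hAiU
    rw [hAit] at h2
    exact h2
  have key : X * S₀ * X = S₁ := by
    rw [hX, ← hAA]
    calc A⁻¹ * B * A⁻¹ * (A * A) * (A⁻¹ * B * A⁻¹)
        = A⁻¹ * (B * (A⁻¹ * A) * (A * A⁻¹) * B) * A⁻¹ := by
          simp only [Matrix.mul_assoc]
      _ = A⁻¹ * (B * B) * A⁻¹ := by
          rw [Matrix.nonsing_inv_mul A (isUnit_iff_isUnit_det _ |>.mp hAU),
            Matrix.mul_nonsing_inv A (isUnit_iff_isUnit_det _ |>.mp hAU)]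
          simp [Matrix.mul_assoc]
      _ = A⁻¹ * (A * S₁ * A) * A⁻¹ := by rw [hBB]
      _ = (A⁻¹ * A) * S₁ * (A * A⁻¹) := by simp only [Matrix.mul_assoc]
      _ = S₁ := by
          rw [Matrix.nonsing_inv_mul A (isUnit_iff_isUnit_det _ |>.mp hAU),
            Matrix.mul_nonsing_inv A (isUnit_iff_isUnit_det _ |>.mp hAU)]
          simp
  refine ⟨hXpd, key, fun Y hY hYeq => ?_⟩
  have hCsq : (A * Y * A) ^ 2 = A * S₁ * A := by
    rw [pow_two, ← hYeq, ← hAA]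
    calc A * Y * A * (A * Y * A) = A * (Y * (A * A) * Y) * A := by simp only [Matrix.mul_assoc]
      _ = A * (Y * (A * A) * Y) * A := rfl
  have hCpd : (A * Y * A).PosDef := by
    have := posDef_conj hY hAU
    rwa [hAt] at this
  have hC_eq : A * Y * A = (open scoped MatrixOrder in CFC.sqrt (A * S₁ * A)) := by
    open scoped MatrixOrder in rw [← hCsq, CFC.sqrt_sq _ hCpd.posSemidef.nonneg]
  have hB_eq : B = (open scoped MatrixOrder in CFC.sqrt (A * S₁ * A)) := by
    open scoped MatrixOrder in rw [← hBB, ← pow_two, CFC.sqrt_sq _ hBpsd.nonneg]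
  have hCB : A * Y * A = B := by rw [hC_eq, hB_eq]
  have : A⁻¹ * (A * Y * A) * A⁻¹ = A⁻¹ * B * A⁻¹ := by rw [hCB]
  rw [hX, ← this]
  calc Y = (A⁻¹ * A) * Y * (A * A⁻¹) := by
        rw [Matrix.nonsing_inv_mul A (isUnit_iff_isUnit_det _ |>.mp hAU),
          Matrix.mul_nonsing_inv A (isUnit_iff_isUnit_det _ |>.mp hAU)]
        simp
    _ = A⁻¹ * (A * Y * A) * A⁻¹ := by simp only [Matrix.mul_assoc]
end

section
/- Let Σ₀, Σ₁ be symmetric positive definite, μ₀, μ₁ ∈ ℝⁿ, A = log(Σ₀^{-1/2}(Σ₀^{1/2} Σ₁ Σ₀^{1/2})^{1/2} Σ₀^{-1/2}), b = ((e^{A} − I) A⁺ + P_A)^{-1}(μ₁ − e^{A} μ₀), M = 2A e^{2A} − e^{2A} + I, R = e^{A}, and Q = (R − I)⁺ (log(R²) R² − R² + I) (R − I)⁺. Then (μ₀ + A⁺ b)ᵀ M (μ₀ + A⁺ b) = ‖√Q (μ₁ − μ₀)‖². -/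
open Matrix MeasureTheory ProbabilityTheory
open scoped Classical

noncomputable section StmtAux

/-- scalar pseudo-inverse -/
def gi (x : ℝ) : ℝ := if x = 0 then 0 else x⁻¹

namespace StmtAux

variable {n : ℕ}

/-- conjugated diagonal matrix -/
def cj (U : Matrix (Fin n) (Fin n) ℝ) (f : Fin n → ℝ) : Matrix (Fin n) (Fin n) ℝ :=
  U * Matrix.diagonal f * Uᵀ

variable {U : Matrix (Fin n) (Fin n) ℝ}

theorem cj_mul (hU2 : Uᵀ * U = 1) (f g : Fin n → ℝ) :
    cj U f * cj U g = cj U (fun i => f i * g i) := by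
  have hU2' : ∀ X : Matrix (Fin n) (Fin n) ℝ, Uᵀ * (U * X) = X := fun X => by
    rw [← mul_assoc, hU2, one_mul]
  simp only [cj, mul_assoc, hU2']
  rw [← mul_assoc (Matrix.diagonal f), Matrix.diagonal_mul_diagonal]

theorem cj_one (hU1 : U * Uᵀ = 1) : cj U (fun _ => (1:ℝ)) = 1 := by
  simp only [cj]
  rw [Matrix.diagonal_one, mul_one, hU1]

theorem cj_sub (f g : Fin n → ℝ) : cj U f - cj U g = cj U (fun i => f i - g i) := by
  simp only [cj, ← Matrix.diagonal_sub, Matrix.sub_mul, Matrix.mul_sub]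

theorem cj_add (f g : Fin n → ℝ) : cj U f + cj U g = cj U (fun i => f i + g i) := by
  simp only [cj, ← Matrix.diagonal_add, Matrix.add_mul, Matrix.mul_add]

theorem cj_smul (c : ℝ) (f : Fin n → ℝ) : c • cj U f = cj U (fun i => c * f i) := by
  have h1 : Matrix.diagonal (fun i => c * f i) = c • Matrix.diagonal f := by
    rw [← Matrix.diagonal_smul]; rfl
  simp only [cj, h1, Matrix.mul_smul, Matrix.smul_mul]

theorem cj_transpose (f : Fin n → ℝ) : (cj U f)ᵀ = cj U f := by
  simp [cj, Matrix.transpose_mul, Matrix.diagonal_transpose, mul_assoc]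

theorem cj_inv (hU1 : U * Uᵀ = 1) (hU2 : Uᵀ * U = 1) {f : Fin n → ℝ} (hf : ∀ i, f i ≠ 0) :
    (cj U f)⁻¹ = cj U (fun i => (f i)⁻¹) := by
  apply Matrix.inv_eq_right_inv
  rw [cj_mul hU2]
  have : (fun i => f i * (f i)⁻¹) = fun _ : Fin n => (1:ℝ) :=
    funext fun i => mul_inv_cancel₀ (hf i)
  rw [this, cj_one hU1]


theorem cj_exp (hU1 : U * Uᵀ = 1) (f : Fin n → ℝ) :
    mexp (cj U f) = cj U (fun i => Real.exp (f i)) := by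
  have hUu : IsUnit U := by
    rw [Matrix.isUnit_iff_isUnit_det]
    exact IsUnit.of_mul_eq_one _ (by rw [← Matrix.det_mul, hU1, Matrix.det_one])
  have hUi : U⁻¹ = Uᵀ := Matrix.inv_eq_right_inv hU1
  simp only [mexp, cj, ← hUi]
  rw [Matrix.exp_conj U _ hUu]
  congr 1
  rw [Matrix.exp_diagonal]
  have : NormedSpace.exp f = fun i => Real.exp (f i) := by
    funext i
    rw [Pi.coe_exp, ← Real.exp_eq_exp_ℝ]
  rw [this]

theorem pinv_unique {A B C : Matrix (Fin n) (Fin n) ℝ}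
    (hB1 : A * B * A = A) (hB2 : B * A * B = B) (hB3 : (A * B)ᵀ = A * B) (hB4 : (B * A)ᵀ = B * A)
    (hC1 : A * C * A = A) (hC2 : C * A * C = C) (hC3 : (A * C)ᵀ = A * C) (hC4 : (C * A)ᵀ = C * A) :
    B = C := by
  have hAT1 : Aᵀ = Aᵀ * (A * C) := by
    conv_lhs => rw [← hC1]
    rw [Matrix.transpose_mul, hC3]
  have hAT2 : Aᵀ = (C * A) * Aᵀ := by
    conv_lhs => rw [← hC1]
    rw [mul_assoc, Matrix.transpose_mul, hC4]
  have h1 : A * B = A * C := by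
    calc A * B = (A * B)ᵀ := hB3.symm
    _ = Bᵀ * Aᵀ := Matrix.transpose_mul _ _
    _ = Bᵀ * (Aᵀ * (A * C)) := by rw [← hAT1]
    _ = (Bᵀ * Aᵀ) * (A * C) := by rw [mul_assoc]
    _ = (A * B)ᵀ * (A * C) := by rw [Matrix.transpose_mul]
    _ = (A * B) * (A * C) := by rw [hB3]
    _ = (A * B * A) * C := by rw [mul_assoc, mul_assoc, mul_assoc]
    _ = A * C := by rw [hB1]
  have h2 : B * A = C * A := by
    calc B * A = (B * A)ᵀ := hB4.symm
    _ = Aᵀ * Bᵀ := Matrix.transpose_mul _ _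
    _ = ((C * A) * Aᵀ) * Bᵀ := by rw [← hAT2]
    _ = (C * A) * (Aᵀ * Bᵀ) := by rw [mul_assoc]
    _ = (C * A) * (B * A)ᵀ := by rw [Matrix.transpose_mul]
    _ = (C * A) * (B * A) := by rw [hB4]
    _ = C * (A * B * A) := by rw [mul_assoc, mul_assoc]
    _ = C * A := by rw [hB1]
  calc B = B * A * B := hB2.symm
  _ = B * A * C := by rw [mul_assoc, h1, ← mul_assoc]
  _ = C * A * C := by rw [h2]
  _ = C := hC2

theorem pinv_eq {A B : Matrix (Fin n) (Fin n) ℝ}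
    (h1 : A * B * A = A) (h2 : B * A * B = B) (h3 : (A * B)ᵀ = A * B) (h4 : (B * A)ᵀ = B * A) :
    pinv A = B := by
  have hex : ∃ B' : Matrix (Fin n) (Fin n) ℝ,
      A * B' * A = A ∧ B' * A * B' = B' ∧ (A * B')ᵀ = A * B' ∧ (B' * A)ᵀ = B' * A :=
    ⟨B, h1, h2, h3, h4⟩
  rw [pinv, dif_pos hex]
  obtain ⟨e1, e2, e3, e4⟩ := hex.choose_spec
  exact pinv_unique e1 e2 e3 e4 h1 h2 h3 h4

theorem cj_pinv (hU1 : U * Uᵀ = 1) (hU2 : Uᵀ * U = 1) (f : Fin n → ℝ) :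
    pinv (cj U f) = cj U (fun i => gi (f i)) := by
  apply pinv_eq
  · rw [cj_mul hU2, cj_mul hU2]
    exact congrArg (cj U) (funext fun i => by
      by_cases h : f i = 0 <;> simp [gi, h])
  · rw [cj_mul hU2, cj_mul hU2]
    exact congrArg (cj U) (funext fun i => by
      by_cases h : f i = 0 <;> simp [gi, h])
  · rw [cj_mul hU2, cj_transpose]
  · rw [cj_mul hU2, cj_transpose]

theorem cj_isSymm (f : Fin n → ℝ) : (cj U f).IsSymm := cj_transpose f

theorem cj_mulVec_left (hU2 : Uᵀ * U = 1) (f : Fin n → ℝ) (x : Fin n → ℝ) :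
    Uᵀ *ᵥ (cj U f *ᵥ x) = Matrix.diagonal f *ᵥ (Uᵀ *ᵥ x) := by
  have : Uᵀ * (cj U f) = Matrix.diagonal f * Uᵀ := by
    simp only [cj, ← mul_assoc, hU2, one_mul]
  rw [Matrix.mulVec_mulVec, Matrix.mulVec_mulVec, this]

theorem dot_cj (hU2 : Uᵀ * U = 1) (f : Fin n → ℝ) (x y : Fin n → ℝ) :
    x ⬝ᵥ (cj U f *ᵥ y) = ∑ i, f i * ((Uᵀ *ᵥ x) i * ((Uᵀ *ᵥ y) i)) := by
  have h1 : cj U f *ᵥ y = U *ᵥ (Matrix.diagonal f *ᵥ (Uᵀ *ᵥ y)) := by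
    simp only [cj, Matrix.mulVec_mulVec, mul_assoc]
  rw [h1, Matrix.dotProduct_mulVec, ← Matrix.mulVec_transpose]
  simp only [dotProduct, Matrix.mulVec_diagonal]
  exact Finset.sum_congr rfl fun i _ => by ring

theorem cj_posSemidef (hU2 : Uᵀ * U = 1) {f : Fin n → ℝ} (hf : ∀ i, 0 ≤ f i) :
    (cj U f).PosSemidef := by
  have hss : (Matrix.diagonal fun i => Real.sqrt (f i)) *
      (Matrix.diagonal fun i => Real.sqrt (f i)) = Matrix.diagonal f := by
    have hf' : (fun i => Real.sqrt (f i) * Real.sqrt (f i)) = f :=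
      funext fun i => Real.mul_self_sqrt (hf i)
    rw [Matrix.diagonal_mul_diagonal, hf']
  have key : cj U f =
      (U * Matrix.diagonal fun i => Real.sqrt (f i)) *
        (U * Matrix.diagonal fun i => Real.sqrt (f i))ᴴ := by
    rw [Matrix.conjTranspose_eq_transpose_of_trivial, Matrix.transpose_mul,
      Matrix.diagonal_transpose, cj, ← hss]
    simp only [mul_assoc]
  rw [key]
  exact Matrix.posSemidef_self_mul_conjTranspose _

theorem isSymm_spectral {A : Matrix (Fin n) (Fin n) ℝ} (hA : A.IsSymm) :
    ∃ (U : Matrix (Fin n) (Fin n) ℝ) (d : Fin n → ℝ),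
      U * Uᵀ = 1 ∧ Uᵀ * U = 1 ∧ A = cj U d := by
  have hH : A.IsHermitian := by
    rwa [Matrix.IsHermitian, Matrix.conjTranspose_eq_transpose_of_trivial]
  refine ⟨hH.eigenvectorUnitary, hH.eigenvalues, ?_, ?_, ?_⟩
  · have h := (Matrix.mem_unitaryGroup_iff).mp hH.eigenvectorUnitary.2
    rwa [Matrix.star_eq_conjTranspose, Matrix.conjTranspose_eq_transpose_of_trivial] at h
  · have h := (Matrix.mem_unitaryGroup_iff').mp hH.eigenvectorUnitary.2
    rwa [Matrix.star_eq_conjTranspose, Matrix.conjTranspose_eq_transpose_of_trivial] at h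
  · have h := hH.spectral_theorem
    rwa [Unitary.conjStarAlgAut_apply, Matrix.star_eq_conjTranspose, Matrix.conjTranspose_eq_transpose_of_trivial] at h

theorem mexp_symm_inj {L K : Matrix (Fin n) (Fin n) ℝ} (hL : L.IsSymm) (hK : K.IsSymm)
    (h : mexp L = mexp K) : L = K := by
  obtain ⟨U, d, hU1, hU2, hLd⟩ := isSymm_spectral hL
  obtain ⟨V, e, hV1, hV2, hKe⟩ := isSymm_spectral hK
  have hU1' : ∀ X : Matrix (Fin n) (Fin n) ℝ, U * (Uᵀ * X) = X := fun X => by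
    rw [← mul_assoc, hU1, one_mul]
  have hU2' : ∀ X : Matrix (Fin n) (Fin n) ℝ, Uᵀ * (U * X) = X := fun X => by
    rw [← mul_assoc, hU2, one_mul]
  have hEL : cj U (fun i => Real.exp (d i)) = cj V (fun i => Real.exp (e i)) := by
    rw [← cj_exp hU1, ← cj_exp hV1, ← hLd, ← hKe]; exact h
  have h1 : ∀ f : Fin n → ℝ, Uᵀ * cj U f * V = Matrix.diagonal f * (Uᵀ * V) := by
    intro f
    simp only [cj, mul_assoc, hU2']
  have h2 : ∀ g : Fin n → ℝ, Uᵀ * cj V g * V = (Uᵀ * V) * Matrix.diagonal g := by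
    intro g
    simp only [cj, mul_assoc, hV2, mul_one]
  have hW : Matrix.diagonal (fun i => Real.exp (d i)) * (Uᵀ * V)
      = (Uᵀ * V) * Matrix.diagonal (fun i => Real.exp (e i)) := by
    rw [← h1, ← h2, hEL]
  have hDW : Matrix.diagonal d * (Uᵀ * V) = (Uᵀ * V) * Matrix.diagonal e := by
    ext i j
    rw [Matrix.diagonal_mul, Matrix.mul_diagonal]
    have h2' : Real.exp (d i) * (Uᵀ * V) i j = (Uᵀ * V) i j * Real.exp (e j) := by
      have hh := congrFun (congrFun hW i) j
      simpa only [Matrix.diagonal_mul, Matrix.mul_diagonal] using hh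
    by_cases hz : (Uᵀ * V) i j = 0
    · simp [hz]
    · rw [mul_comm ((Uᵀ * V) i j)] at h2'
      have hde : d i = e j := Real.exp_injective (mul_right_cancel₀ hz h2')
      rw [hde, mul_comm]
  have h3 : U * (Matrix.diagonal d * (Uᵀ * V)) * Vᵀ = L := by
    rw [hLd]
    simp only [cj, mul_assoc]
    rw [hV1, mul_one]
  have h4 : U * ((Uᵀ * V) * Matrix.diagonal e) * Vᵀ = K := by
    rw [hKe]
    simp only [cj, mul_assoc, hU1']
  calc L = U * (Matrix.diagonal d * (Uᵀ * V)) * Vᵀ := h3.symm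
  _ = U * ((Uᵀ * V) * Matrix.diagonal e) * Vᵀ := by rw [hDW]
  _ = K := h4

theorem matLog_isSymm (S : Matrix (Fin n) (Fin n) ℝ) : (matLog S).IsSymm := by
  rw [matLog]
  split
  · next hex => exact hex.choose_spec.1
  · simp [Matrix.IsSymm]

theorem matLog_eq {S L : Matrix (Fin n) (Fin n) ℝ} (hL : L.IsSymm) (hE : mexp L = S) :
    matLog S = L := by
  have hex : ∃ A : Matrix (Fin n) (Fin n) ℝ, A.IsSymm ∧ mexp A = S := ⟨L, hL, hE⟩
  rw [matLog, dif_pos hex]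
  exact mexp_symm_inj hex.choose_spec.1 hL (hex.choose_spec.2.trans hE.symm)

theorem msqrt_spec {S B : Matrix (Fin n) (Fin n) ℝ} (hB : B.PosSemidef) (h : B * B = S) :
    (msqrt S).PosSemidef ∧ msqrt S * msqrt S = S := by
  have hex : ∃ B' : Matrix (Fin n) (Fin n) ℝ, B'.PosSemidef ∧ B' * B' = S := ⟨B, hB, h⟩
  rw [msqrt, dif_pos hex]
  exact hex.choose_spec

theorem m_nonneg (x : ℝ) : 0 ≤ 2 * (x * Real.exp (2 * x)) - Real.exp (2 * x) + 1 := by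
  have h1 : 1 - 2 * x ≤ Real.exp (-(2 * x)) := by
    have := Real.add_one_le_exp (-(2 * x)); linarith
  have h2 : Real.exp (-(2 * x)) * Real.exp (2 * x) = 1 := by
    rw [← Real.exp_add]; simp
  nlinarith [Real.exp_pos (2 * x), mul_le_mul_of_nonneg_right h1 (Real.exp_pos (2 * x)).le]

theorem key_scalar (x a b : ℝ) :
    (2 * (x * Real.exp (2 * x)) - Real.exp (2 * x) + 1) *
        ((a + gi x * (((Real.exp x - 1) * gi x + (1 - x * gi x))⁻¹ * (b - Real.exp x * a))) *
         (a + gi x * (((Real.exp x - 1) * gi x + (1 - x * gi x))⁻¹ * (b - Real.exp x * a))))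
      = (gi (Real.exp x - 1) * (2 * x * Real.exp (2 * x) - Real.exp (2 * x) + 1) *
          gi (Real.exp x - 1)) * ((b - a) * (b - a)) := by
  have hE2 : Real.exp (2 * x) = Real.exp x * Real.exp x := by
    rw [two_mul, Real.exp_add]
  by_cases hx : x = 0
  · simp [gi, hx]
  · have hE1 : Real.exp x - 1 ≠ 0 :=
      sub_ne_zero_of_ne fun hh => hx (Real.exp_injective (by rw [hh, Real.exp_zero]))
    simp only [gi, if_neg hx, if_neg hE1]
    have hc : (Real.exp x - 1) * x⁻¹ + (1 - x * x⁻¹) = (Real.exp x - 1) * x⁻¹ := by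
      rw [mul_inv_cancel₀ hx]; ring
    rw [hc, hE2, _root_.mul_inv_rev, inv_inv]
    field_simp
    ring

end StmtAux


/-- The mean term: `(μ₀ + A⁺b)ᵀ M (μ₀ + A⁺b) = ‖√Q (μ₁ − μ₀)‖²`. -/
theorem stmt12 {n : ℕ} (μ₀ μ₁ : Fin n → ℝ) (S₀ S₁ : Matrix (Fin n) (Fin n) ℝ)
    (h₀ : S₀.PosDef) (h₁ : S₁.PosDef) (A : Matrix (Fin n) (Fin n) ℝ)
    (hA : A = matLog ((msqrt S₀)⁻¹ * msqrt (msqrt S₀ * S₁ * msqrt S₀) * (msqrt S₀)⁻¹))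
    (b : Fin n → ℝ)
    (hb : b = ((mexp A - 1) * pinv A + nullProj A)⁻¹ *ᵥ (μ₁ - mexp A *ᵥ μ₀))
    (M : Matrix (Fin n) (Fin n) ℝ)
    (hM : M = (2 : ℝ) • (A * mexp ((2 : ℝ) • A)) - mexp ((2 : ℝ) • A) + 1)
    (R : Matrix (Fin n) (Fin n) ℝ) (hR : R = mexp A)
    (Q : Matrix (Fin n) (Fin n) ℝ)
    (hQ : Q = pinv (R - 1) * (matLog (R * R) * (R * R) - R * R + 1) * pinv (R - 1)) :
    (μ₀ + pinv A *ᵥ b) ⬝ᵥ (M *ᵥ (μ₀ + pinv A *ᵥ b)) = sqNorm (msqrt Q *ᵥ (μ₁ - μ₀)) := by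
  have hAs : A.IsSymm := by rw [hA]; exact StmtAux.matLog_isSymm _
  obtain ⟨U, d, hU1, hU2, hAd⟩ := StmtAux.isSymm_spectral hAs
  have h_exp : mexp A = StmtAux.cj U (fun i => Real.exp (d i)) := by
    rw [hAd]; exact StmtAux.cj_exp hU1 _
  have h_pinvA : pinv A = StmtAux.cj U (fun i => gi (d i)) := by
    rw [hAd]; exact StmtAux.cj_pinv hU1 hU2 _
  have h_one : (1 : Matrix (Fin n) (Fin n) ℝ) = StmtAux.cj U (fun _ => 1) :=
    (StmtAux.cj_one hU1).symm
  have h_null : nullProj A = StmtAux.cj U (fun i => 1 - d i * gi (d i)) := by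
    rw [nullProj, h_pinvA, hAd, StmtAux.cj_mul hU2, h_one, StmtAux.cj_sub]
  have h_C : (mexp A - 1) * pinv A + nullProj A
      = StmtAux.cj U (fun i => (Real.exp (d i) - 1) * gi (d i) + (1 - d i * gi (d i))) := by
    rw [h_exp, h_one, StmtAux.cj_sub, h_pinvA, StmtAux.cj_mul hU2, h_null, StmtAux.cj_add]
  have hc_ne : ∀ i, (Real.exp (d i) - 1) * gi (d i) + (1 - d i * gi (d i)) ≠ 0 := by
    intro i
    by_cases h : d i = 0
    · simp [gi, h]
    · have hx : (Real.exp (d i) - 1) * gi (d i) + (1 - d i * gi (d i))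
          = (Real.exp (d i) - 1) * (d i)⁻¹ := by
        simp only [gi, if_neg h]
        rw [mul_inv_cancel₀ h]; ring
      rw [hx]
      exact mul_ne_zero
        (sub_ne_zero_of_ne fun hh => h (Real.exp_injective (by rw [hh, Real.exp_zero])))
        (inv_ne_zero h)
  have h_Cinv : ((mexp A - 1) * pinv A + nullProj A)⁻¹
      = StmtAux.cj U (fun i =>
          ((Real.exp (d i) - 1) * gi (d i) + (1 - d i * gi (d i)))⁻¹) := by
    rw [h_C]; exact StmtAux.cj_inv hU1 hU2 hc_ne
  have h2A : (2:ℝ) • A = StmtAux.cj U (fun i => 2 * d i) := by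
    rw [hAd]; exact StmtAux.cj_smul 2 d
  have h_exp2A : mexp ((2:ℝ) • A) = StmtAux.cj U (fun i => Real.exp (2 * d i)) := by
    rw [h2A]; exact StmtAux.cj_exp hU1 _
  have h2Asymm : ((2:ℝ) • A).IsSymm := by
    rw [Matrix.IsSymm, Matrix.transpose_smul, hAs]
  have h_M : M = StmtAux.cj U
      (fun i => 2 * (d i * Real.exp (2 * d i)) - Real.exp (2 * d i) + 1) := by
    rw [hM, h_exp2A, hAd, StmtAux.cj_mul hU2, StmtAux.cj_smul, h_one, StmtAux.cj_sub,
      StmtAux.cj_add]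
  have h_R : R = StmtAux.cj U (fun i => Real.exp (d i)) := hR.trans h_exp
  have h_RR : R * R = StmtAux.cj U (fun i => Real.exp (2 * d i)) := by
    rw [h_R, StmtAux.cj_mul hU2]
    exact congrArg (StmtAux.cj U) (funext fun i => by rw [← Real.exp_add, two_mul])
  have h_logRR : matLog (R * R) = (2:ℝ) • A :=
    StmtAux.matLog_eq h2Asymm (h_exp2A.trans h_RR.symm)
  have h_Rm1 : R - 1 = StmtAux.cj U (fun i => Real.exp (d i) - 1) := by
    rw [h_R, h_one, StmtAux.cj_sub]
  have h_pinvR : pinv (R - 1) = StmtAux.cj U (fun i => gi (Real.exp (d i) - 1)) := by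
    rw [h_Rm1]; exact StmtAux.cj_pinv hU1 hU2 _
  have h_mid : matLog (R * R) * (R * R) - R * R + 1
      = StmtAux.cj U (fun i => 2 * d i * Real.exp (2 * d i) - Real.exp (2 * d i) + 1) := by
    rw [h_logRR, h2A, h_RR, StmtAux.cj_mul hU2, h_one, StmtAux.cj_sub, StmtAux.cj_add]
  have h_Q : Q = StmtAux.cj U (fun i => gi (Real.exp (d i) - 1) * (2 * d i * Real.exp (2 * d i) - Real.exp (2 * d i) + 1) * gi (Real.exp (d i) - 1)) := by
    rw [hQ, h_mid, h_pinvR, StmtAux.cj_mul hU2, StmtAux.cj_mul hU2]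
  have hq_nonneg : ∀ i, 0 ≤ gi (Real.exp (d i) - 1) * (2 * d i * Real.exp (2 * d i) - Real.exp (2 * d i) + 1) * gi (Real.exp (d i) - 1) := by
    intro i
    have h1 := StmtAux.m_nonneg (d i)
    have h2 : gi (Real.exp (d i) - 1) * (2 * d i * Real.exp (2 * d i) - Real.exp (2 * d i) + 1) * gi (Real.exp (d i) - 1)
        = (2 * (d i * Real.exp (2 * d i)) - Real.exp (2 * d i) + 1) *
          (gi (Real.exp (d i) - 1) * gi (Real.exp (d i) - 1)) := by ring
    rw [h2]
    exact mul_nonneg h1 (mul_self_nonneg _)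
  have hB0psd : (StmtAux.cj U (fun i => Real.sqrt (gi (Real.exp (d i) - 1) * (2 * d i * Real.exp (2 * d i) - Real.exp (2 * d i) + 1) * gi (Real.exp (d i) - 1)))).PosSemidef :=
    StmtAux.cj_posSemidef hU2 (fun i => Real.sqrt_nonneg _)
  have hB0sq : StmtAux.cj U (fun i => Real.sqrt (gi (Real.exp (d i) - 1) * (2 * d i * Real.exp (2 * d i) - Real.exp (2 * d i) + 1) * gi (Real.exp (d i) - 1))) *
      StmtAux.cj U (fun i => Real.sqrt (gi (Real.exp (d i) - 1) * (2 * d i * Real.exp (2 * d i) - Real.exp (2 * d i) + 1) * gi (Real.exp (d i) - 1))) = Q := by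
    rw [StmtAux.cj_mul hU2, h_Q]
    exact congrArg (StmtAux.cj U) (funext fun i => Real.mul_self_sqrt (hq_nonneg i))
  have hBq := StmtAux.msqrt_spec hB0psd hB0sq
  have hBqT : (msqrt Q)ᵀ = msqrt Q := by
    have h : (msqrt Q)ᴴ = msqrt Q := hBq.1.1
    rwa [Matrix.conjTranspose_eq_transpose_of_trivial] at h
  have hRHS : sqNorm (msqrt Q *ᵥ (μ₁ - μ₀)) = (μ₁ - μ₀) ⬝ᵥ (Q *ᵥ (μ₁ - μ₀)) := by
    have h1 : sqNorm (msqrt Q *ᵥ (μ₁ - μ₀))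
        = (msqrt Q *ᵥ (μ₁ - μ₀)) ⬝ᵥ (msqrt Q *ᵥ (μ₁ - μ₀)) := by
      simp [sqNorm, dotProduct, pow_two]
    rw [h1, Matrix.dotProduct_mulVec, ← Matrix.mulVec_transpose, hBqT,
      Matrix.mulVec_mulVec, hBq.2, dotProduct_comm]
  have hUtv : Uᵀ *ᵥ (μ₀ + pinv A *ᵥ b) = (Uᵀ *ᵥ μ₀) +
      Matrix.diagonal (fun i => gi (d i)) *ᵥ
        (Matrix.diagonal (fun i =>
            ((Real.exp (d i) - 1) * gi (d i) + (1 - d i * gi (d i)))⁻¹) *ᵥ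
          ((Uᵀ *ᵥ μ₁) - Matrix.diagonal (fun i => Real.exp (d i)) *ᵥ (Uᵀ *ᵥ μ₀))) := by
    rw [hb, h_Cinv, h_pinvA, h_exp, Matrix.mulVec_add, StmtAux.cj_mulVec_left hU2,
      StmtAux.cj_mulVec_left hU2, Matrix.mulVec_sub, StmtAux.cj_mulVec_left hU2]
  rw [hRHS, h_M, h_Q, StmtAux.dot_cj hU2, StmtAux.dot_cj hU2, hUtv]
  simp only [Matrix.mulVec_sub, Pi.add_apply, Pi.sub_apply, Matrix.mulVec_diagonal]
  refine Finset.sum_congr rfl fun i _ => ?_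
  linear_combination StmtAux.key_scalar (d i) ((Uᵀ *ᵥ μ₀) i) ((Uᵀ *ᵥ μ₁) i)
end StmtAux
end

section
/- (Corollary 1, unequal variances) Let μ = N(μ₀, σ₀²) and ν = N(μ₁, σ₁²) be univariate Gaussian measures on ℝ with σ₀ > 0, σ₁ > 0 and σ₀ ≠ σ₁. Then D_WKL(μ ∥ ν) = [ (σ₀² − σ₁² + σ₁² log(σ₁²/σ₀²)) / (4 (σ₁ − σ₀)²) ] · ( (σ₁ − σ₀)² + (μ₁ − μ₀)² ). -/
open Matrix MeasureTheory ProbabilityTheory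
open scoped Classical

noncomputable section Aux
open Set Filter

def sol (a b t x : ℝ) : ℝ := Real.exp (a * t) * x + (Real.exp (a * t) - 1) * (b / a) + (if a = 0 then b * t - (Real.exp (a*t) - 1) * (b/a) else 0)

lemma sol_spec (a b : ℝ) (ha : a ≠ 0) (t x : ℝ) :
    sol a b t x = Real.exp (a * t) * (x + b / a) - b / a := by
  simp [sol, ha]; ring

lemma sol_zero (a b x : ℝ) : sol a b 0 x = x := by
  by_cases h : a = 0 <;> simp [sol, h]

lemma sol_deriv (a b : ℝ) (x t : ℝ) :
    HasDerivAt (fun s => sol a b s x) (a * sol a b t x + b) t := by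
  by_cases h : a = 0
  · simp only [sol, h, if_true, Real.exp_zero]
    have : (fun s : ℝ => Real.exp (0 * s) * x + (Real.exp (0 * s) - 1) * (b / 0) + (b * s - (Real.exp (0*s) - 1) * (b/0))) = fun s => x + b * s := by
      funext s; simp
    rw [this]
    simpa using ((hasDerivAt_id t).const_mul b).const_add x
  · simp only [sol, h, if_false, add_zero]
    have h1 : HasDerivAt (fun s : ℝ => Real.exp (a * s)) (a * Real.exp (a * t)) t := by
      simpa [mul_comm, Function.comp_def] using (Real.hasDerivAt_exp (a*t)).comp t ((hasDerivAt_id t).const_mul a)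
    have := (h1.mul_const x).add (((h1.sub_const 1).mul_const (b/a)))
    refine this.congr_deriv ?_
    field_simp
    ring

lemma flow1_eq (a b : ℝ) : flow1 a b = fun t x => sol a b t x := by
  have hex : ∃ φ : ℝ → ℝ → ℝ,
      (∀ x₀, φ 0 x₀ = x₀) ∧ ∀ x₀ t, HasDerivAt (fun s => φ s x₀) (a * φ t x₀ + b) t :=
    ⟨fun t x => sol a b t x, fun x => sol_zero a b x, fun x t => sol_deriv a b x t⟩
  rw [flow1, dif_pos hex]
  obtain ⟨h0, hd⟩ := hex.choose_spec
  funext t x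
  have lip : LipschitzWith ⟨|a|, abs_nonneg a⟩ (fun y : ℝ => a * y + b) := by
    apply LipschitzWith.of_dist_le_mul
    intro p q
    simp only [Real.dist_eq]
    have : a * p + b - (a * q + b) = a * (p - q) := by ring
    rw [this, abs_mul]
    rfl
  set φ := hex.choose
  set R : ℝ := |t| + 1 with hR
  have hT : t ∈ Icc (-R) R := by
    constructor
    · nlinarith [abs_nonneg t, neg_abs_le t]
    · nlinarith [le_abs_self t]
  have h0mem : (0:ℝ) ∈ Ioo (-R) R := by
    constructor <;> [nlinarith [abs_nonneg t]; nlinarith [abs_nonneg t]]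
  exact ODE_solution_unique_of_mem_Icc (v := fun _ y => a * y + b)
    (s := fun _ => univ) (K := ⟨|a|, abs_nonneg a⟩)
    (fun _ _ => lip.lipschitzOnWith) h0mem
    (fun s _ => ((hd x s).continuousAt.continuousWithinAt))
    (fun s _ => hd x s) (fun _ _ => trivial)
    (fun s _ => ((sol_deriv a b x s).continuousAt.continuousWithinAt))
    (fun s _ => sol_deriv a b x s) (fun _ _ => trivial)
    (by rw [h0 x, sol_zero]) hT

lemma gaussian_affine (m : ℝ) (v : NNReal) (c d : ℝ) :
    (gaussianReal m v).map (fun x => c * x + d)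
      = gaussianReal (c * m + d) (⟨c^2, sq_nonneg c⟩ * v) := by
  have : (fun x : ℝ => c * x + d) = (fun x => x + d) ∘ (fun x => c * x) := by
    funext x; simp
  rw [this, ← Measure.map_map (by fun_prop) (by fun_prop),
    gaussianReal_map_const_mul, gaussianReal_map_add_const]
  rfl

lemma gaussian_repr (m : ℝ) {σ : ℝ} (hσ : 0 < σ) :
    gaussianReal m ⟨σ^2, sq_nonneg σ⟩
      = (gaussianReal 0 1).map (fun x => σ * x + m) := by
  rw [gaussian_affine]
  congr 1
  · simp
  · exact (mul_one _).symm

lemma integral_real_of_hasDerivAt {F F' : ℝ → ℝ} {L M : ℝ}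
    (hd : ∀ x, HasDerivAt F (F' x) x) (hi : Integrable F')
    (hbot : Filter.Tendsto F Filter.atBot (nhds L))
    (htop : Filter.Tendsto F Filter.atTop (nhds M)) :
    ∫ x, F' x = M - L := by
  rw [← setIntegral_univ, ← Set.Iic_union_Ioi (a := (0:ℝ)),
    setIntegral_union (Set.Iic_disjoint_Ioi le_rfl) measurableSet_Ioi
      hi.integrableOn hi.integrableOn]
  rw [integral_Iic_of_hasDerivAt_of_tendsto (hd 0).continuousAt.continuousWithinAt
      (fun x _ => hd x) hi.integrableOn hbot,
    integral_Ioi_of_hasDerivAt_of_tendsto (hd 0).continuousAt.continuousWithinAt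
      (fun x _ => hd x) hi.integrableOn htop]
  ring

lemma tendsto_exp_half_neg : Filter.Tendsto (fun x : ℝ => Real.exp (-(1/2) * x)) Filter.atTop (nhds 0) := by
  apply Real.tendsto_exp_atBot.comp
  apply Filter.Tendsto.const_mul_atTop_of_neg (by norm_num : -(1/2 : ℝ) < 0) Filter.tendsto_id

lemma tendsto_mul_exp_neg_sq_atTop {b : ℝ} (hb : 0 < b) :
    Filter.Tendsto (fun x : ℝ => x * Real.exp (-b * x^2)) Filter.atTop (nhds 0) := by
  have h := (rpow_mul_exp_neg_mul_sq_isLittleO_exp_neg hb 1).trans_tendsto tendsto_exp_half_neg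
  simpa [Real.rpow_one] using h

lemma tendsto_exp_neg_sq_atTop {b : ℝ} (hb : 0 < b) :
    Filter.Tendsto (fun x : ℝ => Real.exp (-b * x^2)) Filter.atTop (nhds 0) := by
  have h := (exp_neg_mul_sq_isLittleO_exp_neg hb).trans_tendsto Real.tendsto_exp_neg_atTop_nhds_zero
  simpa using h

lemma tendsto_comp_neg_atBot {f : ℝ → ℝ} {L : ℝ}
    (h : Filter.Tendsto (fun x => f (-x)) Filter.atTop (nhds L)) :
    Filter.Tendsto f Filter.atBot (nhds L) := by
  have h2 := h.comp Filter.tendsto_neg_atBot_atTop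
  have : ((fun x => f (-x)) ∘ Neg.neg) = f := by funext x; simp
  rwa [this] at h2

lemma integral_mul_exp_neg_sq {b : ℝ} (hb : 0 < b) :
    ∫ x : ℝ, x * Real.exp (-b * x^2) = 0 := by
  have hd : ∀ x : ℝ, HasDerivAt (fun y : ℝ => -Real.exp (-b * y^2) / (2*b))
      (x * Real.exp (-b * x^2)) x := by
    intro x
    have h1 : HasDerivAt (fun y : ℝ => -b * y^2) (-b * (2*x)) x := by
      simpa using ((hasDerivAt_pow 2 x).const_mul (-b))
    have := ((h1.exp).neg).div_const (2*b)
    refine this.congr_deriv ?_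
    field_simp
  have hbot : Filter.Tendsto (fun y : ℝ => -Real.exp (-b * y^2) / (2*b)) Filter.atBot (nhds 0) := by
    apply tendsto_comp_neg_atBot
    have := ((tendsto_exp_neg_sq_atTop hb).neg).div_const (2*b)
    simpa using this.congr (fun x => by ring_nf)
  have htop : Filter.Tendsto (fun y : ℝ => -Real.exp (-b * y^2) / (2*b)) Filter.atTop (nhds 0) := by
    have := ((tendsto_exp_neg_sq_atTop hb).neg).div_const (2*b)
    simpa using this
  simpa using integral_real_of_hasDerivAt hd (integrable_mul_exp_neg_mul_sq hb) hbot htop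

lemma integrable_sq_exp_neg_sq {b : ℝ} (hb : 0 < b) :
    Integrable (fun x : ℝ => x^2 * Real.exp (-b * x^2)) := by
  have := integrable_rpow_mul_exp_neg_mul_sq hb (s := 2) (by norm_num)
  refine this.congr ?_
  filter_upwards with x
  rw [show (2:ℝ) = ((2:ℕ):ℝ) by norm_num, Real.rpow_natCast]

lemma integral_sq_exp_neg_sq {b : ℝ} (hb : 0 < b) :
    ∫ x : ℝ, x^2 * Real.exp (-b * x^2) = Real.sqrt (Real.pi / b) / (2*b) := by
  have hd : ∀ x : ℝ, HasDerivAt (fun y : ℝ => -y * Real.exp (-b * y^2) / (2*b))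
      (x^2 * Real.exp (-b * x^2) - Real.exp (-b * x^2) / (2*b)) x := by
    intro x
    have h1 : HasDerivAt (fun y : ℝ => -b * y^2) (-b * (2*x)) x := by
      simpa using ((hasDerivAt_pow 2 x).const_mul (-b))
    have h2 : HasDerivAt (fun y : ℝ => -y) (-1 : ℝ) x := (hasDerivAt_id x).neg
    have := ((h2.mul h1.exp)).div_const (2*b)
    refine this.congr_deriv ?_
    field_simp
    ring
  have hF' : Integrable (fun x : ℝ => x^2 * Real.exp (-b * x^2) - Real.exp (-b * x^2) / (2*b)) :=
    (integrable_sq_exp_neg_sq hb).sub ((integrable_exp_neg_mul_sq hb).div_const _)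
  have hbot : Filter.Tendsto (fun y : ℝ => -y * Real.exp (-b * y^2) / (2*b)) Filter.atBot (nhds 0) := by
    apply tendsto_comp_neg_atBot
    have h := (tendsto_mul_exp_neg_sq_atTop hb).div_const (2*b)
    rw [zero_div] at h
    simpa using h
  have htop : Filter.Tendsto (fun y : ℝ => -y * Real.exp (-b * y^2) / (2*b)) Filter.atTop (nhds 0) := by
    have h := ((tendsto_mul_exp_neg_sq_atTop hb).neg).div_const (2*b)
    rw [neg_zero, zero_div] at h
    simpa [neg_mul] using h
  have key := integral_real_of_hasDerivAt hd hF' hbot htop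
  rw [sub_zero] at key
  have hsplit : ∫ x : ℝ, (x^2 * Real.exp (-b * x^2) - Real.exp (-b * x^2) / (2*b))
      = (∫ x : ℝ, x^2 * Real.exp (-b * x^2)) - (∫ x : ℝ, Real.exp (-b * x^2)) / (2*b) := by
    rw [integral_sub (integrable_sq_exp_neg_sq hb) ((integrable_exp_neg_mul_sq hb).div_const _),
      integral_div]
  rw [hsplit, integral_gaussian] at key
  linarith

lemma pdfbridge : gaussianPDF 0 1 = fun x => ((Real.toNNReal (gaussianPDFReal 0 1 x) : NNReal) : ENNReal) := rfl

lemma integral_std (g : ℝ → ℝ) :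
    ∫ x, g x ∂(gaussianReal 0 1) = ∫ x, gaussianPDFReal 0 1 x * g x := by
  rw [gaussianReal_of_var_ne_zero 0 one_ne_zero, pdfbridge,
    integral_withDensity_eq_integral_smul ((measurable_gaussianPDFReal 0 1).real_toNNReal) g]
  congr 1; funext x
  simp [NNReal.smul_def, Real.coe_toNNReal _ (gaussianPDFReal_nonneg 0 1 x)]

lemma integrable_std_iff (g : ℝ → ℝ) :
    Integrable g (gaussianReal 0 1) ↔ Integrable (fun x => gaussianPDFReal 0 1 x * g x) := by
  rw [gaussianReal_of_var_ne_zero 0 one_ne_zero, pdfbridge,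
    integrable_withDensity_iff_integrable_smul ((measurable_gaussianPDFReal 0 1).real_toNNReal)]
  constructor <;> intro h <;> refine h.congr ?_ <;> filter_upwards with x <;>
    simp [NNReal.smul_def, Real.coe_toNNReal _ (gaussianPDFReal_nonneg 0 1 x)]

lemma pdf_std (x : ℝ) : gaussianPDFReal 0 1 x = (Real.sqrt (2 * Real.pi))⁻¹ * Real.exp (-(1/2) * x^2) := by
  rw [gaussianPDFReal]
  norm_num [neg_div]
  left
  ring_nf

lemma std_mom0 : ∫ x, (1:ℝ) ∂(gaussianReal 0 1) = 1 := by simp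

lemma std_mom1 : ∫ x, x ∂(gaussianReal 0 1) = 0 := by
  rw [integral_std]
  have : ∀ x : ℝ, gaussianPDFReal 0 1 x * x = (Real.sqrt (2 * Real.pi))⁻¹ * (x * Real.exp (-(1/2) * x^2)) := by
    intro x; rw [pdf_std]; ring
  simp_rw [this, integral_const_mul, integral_mul_exp_neg_sq (by norm_num : (0:ℝ) < 1/2), mul_zero]

lemma std_mom2 : ∫ x, x^2 ∂(gaussianReal 0 1) = 1 := by
  rw [integral_std]
  have : ∀ x : ℝ, gaussianPDFReal 0 1 x * x^2 = (Real.sqrt (2 * Real.pi))⁻¹ * (x^2 * Real.exp (-(1/2) * x^2)) := by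
    intro x; rw [pdf_std]; ring
  simp_rw [this, integral_const_mul, integral_sq_exp_neg_sq (by norm_num : (0:ℝ) < 1/2)]
  rw [show Real.pi / (1/2) = 2 * Real.pi by ring]
  rw [show (2:ℝ) * (1/2) = 1 by norm_num, div_one]
  rw [inv_mul_cancel₀]
  positivity

lemma std_int1 : Integrable (fun x : ℝ => x) (gaussianReal 0 1) := by
  rw [integrable_std_iff]
  have : ∀ x : ℝ, gaussianPDFReal 0 1 x * x = (Real.sqrt (2 * Real.pi))⁻¹ * (x * Real.exp (-(1/2) * x^2)) := by
    intro x; rw [pdf_std]; ring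
  simp_rw [this]
  exact (integrable_mul_exp_neg_mul_sq (by norm_num : (0:ℝ) < 1/2)).const_mul _

lemma std_int2 : Integrable (fun x : ℝ => x^2) (gaussianReal 0 1) := by
  rw [integrable_std_iff]
  have : ∀ x : ℝ, gaussianPDFReal 0 1 x * x^2 = (Real.sqrt (2 * Real.pi))⁻¹ * (x^2 * Real.exp (-(1/2) * x^2)) := by
    intro x; rw [pdf_std]; ring
  simp_rw [this]
  exact (integrable_sq_exp_neg_sq (by norm_num : (0:ℝ) < 1/2)).const_mul _

lemma integral_shift_sq (m c : ℝ) {σ : ℝ} (hσ : 0 < σ) :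
    ∫ x, (x + c)^2 ∂(gaussianReal m ⟨σ^2, sq_nonneg σ⟩) = σ^2 + (m + c)^2 := by
  rw [gaussian_repr m hσ,
    integral_map (by fun_prop : AEMeasurable (fun x : ℝ => σ * x + m) _)
      (Continuous.aestronglyMeasurable (by fun_prop) : AEStronglyMeasurable (fun x : ℝ => (x + c)^2) _)]
  have : (fun x : ℝ => (σ * x + m + c)^2)
      = fun x : ℝ => (σ^2 * x^2 + (2*σ*(m+c)) * x) + (m+c)^2 := by
    funext x; ring
  rw [this]
  have h1 : Integrable (fun x : ℝ => σ^2 * x^2) (gaussianReal 0 1) := std_int2.const_mul _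
  have h2 : Integrable (fun x : ℝ => 2*σ*(m+c) * x) (gaussianReal 0 1) := std_int1.const_mul _
  have h12 : Integrable (fun x : ℝ => σ^2 * x^2 + 2*σ*(m+c) * x) (gaussianReal 0 1) := h1.add h2
  rw [integral_add h12 (integrable_const _), integral_add h1 h2,
    integral_const_mul, integral_const_mul, std_mom1, std_mom2, integral_const]
  simp

lemma integrable_shift_sq (m c : ℝ) {σ : ℝ} (hσ : 0 < σ) :
    Integrable (fun x => (x + c)^2) (gaussianReal m ⟨σ^2, sq_nonneg σ⟩) := by
  rw [gaussian_repr m hσ,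
    integrable_map_measure (Continuous.aestronglyMeasurable (by fun_prop) : AEStronglyMeasurable (fun x : ℝ => (x + c)^2) _)
      (by fun_prop : AEMeasurable (fun x : ℝ => σ * x + m) _)]
  have : ((fun x : ℝ => (x + c)^2) ∘ (fun x : ℝ => σ * x + m))
      = fun x : ℝ => (σ^2 * x^2 + (2*σ*(m+c)) * x) + (m+c)^2 := by
    funext x; simp [Function.comp]; ring
  rw [this]
  have h1 : Integrable (fun x : ℝ => σ^2 * x^2) (gaussianReal 0 1) := std_int2.const_mul _
  have h2 : Integrable (fun x : ℝ => 2*σ*(m+c) * x) (gaussianReal 0 1) := std_int1.const_mul _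
  have h12 : Integrable (fun x : ℝ => σ^2 * x^2 + 2*σ*(m+c) * x) (gaussianReal 0 1) := h1.add h2
  exact h12.add (integrable_const _)

lemma integral_id_gauss (m : ℝ) {σ : ℝ} (hσ : 0 < σ) :
    ∫ x, x ∂(gaussianReal m ⟨σ^2, sq_nonneg σ⟩) = m := by
  rw [gaussian_repr m hσ,
    integral_map (by fun_prop : AEMeasurable (fun x : ℝ => σ * x + m) _)
      (Continuous.aestronglyMeasurable (by fun_prop) : AEStronglyMeasurable (fun x : ℝ => x) _)]
  have h1 : Integrable (fun x : ℝ => σ * x) (gaussianReal 0 1) := std_int1.const_mul _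
  rw [integral_add h1 (integrable_const _), integral_const_mul, std_mom1, integral_const]
  simp

lemma integral_sq_gauss (m : ℝ) {σ : ℝ} (hσ : 0 < σ) :
    ∫ x, x^2 ∂(gaussianReal m ⟨σ^2, sq_nonneg σ⟩) = σ^2 + m^2 := by
  have := integral_shift_sq m 0 hσ
  simpa using this

lemma gauss_inj {m₀ m₁ σ₀ σ₁ : ℝ} (h₀ : 0 < σ₀) (h₁ : 0 < σ₁)
    (h : gaussianReal m₀ ⟨σ₀^2, sq_nonneg σ₀⟩ = gaussianReal m₁ ⟨σ₁^2, sq_nonneg σ₁⟩) :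
    m₀ = m₁ ∧ σ₀ = σ₁ := by
  have hm : m₀ = m₁ := by rw [← integral_id_gauss m₀ h₀, h, integral_id_gauss m₁ h₁]
  have hv : σ₀^2 + m₀^2 = σ₁^2 + m₁^2 := by
    rw [← integral_sq_gauss m₀ h₀, h, integral_sq_gauss m₁ h₁]
  have hs : σ₀^2 = σ₁^2 := by rw [hm] at hv; linarith
  refine ⟨hm, ?_⟩
  have := congrArg Real.sqrt hs
  rwa [Real.sqrt_sq h₀.le, Real.sqrt_sq h₁.le] at this

lemma var_mul (c σ : ℝ) :
    (⟨c^2, sq_nonneg c⟩ : NNReal) * ⟨σ^2, sq_nonneg σ⟩ = ⟨(c*σ)^2, sq_nonneg _⟩ := by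
  ext; push_cast; ring

lemma map_affine_var (m σ c d : ℝ) :
    (gaussianReal m ⟨σ^2, sq_nonneg σ⟩).map (fun x => c * x + d)
      = gaussianReal (c*m + d) ⟨(c*σ)^2, sq_nonneg _⟩ := by
  exact (gaussian_affine m _ c d).trans (congrArg _ (var_mul c σ))

lemma flow1_one (a b : ℝ) (ha : a ≠ 0) :
    flow1 a b 1 = fun x => Real.exp a * x + (Real.exp a - 1) * (b / a) := by
  funext x
  rw [flow1_eq]
  show sol a b 1 x = _
  rw [sol_spec a b ha, mul_one]
  ring

lemma flow1_zero_a (b : ℝ) : flow1 0 b 1 = fun x => x + b := by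
  funext x
  rw [flow1_eq]
  simp [sol]

lemma param_unique (μ₀ μ₁ σ₀ σ₁ : ℝ) (h₀ : 0 < σ₀) (h₁ : 0 < σ₁) (hne : σ₀ ≠ σ₁)
    (p : ℝ × ℝ)
    (hp : (gaussianReal μ₀ ⟨σ₀^2, sq_nonneg σ₀⟩).map (flow1 p.1 p.2 1)
        = gaussianReal μ₁ ⟨σ₁^2, sq_nonneg σ₁⟩) :
    p.1 = Real.log (σ₁/σ₀)
      ∧ p.2 = Real.log (σ₁/σ₀) * ((μ₁ - (σ₁/σ₀)*μ₀) / ((σ₁/σ₀) - 1)) := by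
  obtain ⟨a, b⟩ := p
  simp only at hp ⊢
  by_cases ha : a = 0
  · subst ha
    rw [flow1_zero_a] at hp
    have : (gaussianReal μ₀ ⟨σ₀^2, sq_nonneg σ₀⟩).map (fun x => x + b)
        = gaussianReal (μ₀ + b) ⟨σ₀^2, sq_nonneg σ₀⟩ := gaussianReal_map_add_const b
    rw [this] at hp
    exact absurd (gauss_inj h₀ h₁ hp).2 hne
  · rw [flow1_one a b ha, map_affine_var] at hp
    have hpos : 0 < Real.exp a * σ₀ := by positivity
    obtain ⟨hm, hs⟩ := gauss_inj hpos h₁ hp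
    have hk : Real.exp a = σ₁ / σ₀ := by
      field_simp at hs ⊢
      linarith
    have hA : a = Real.log (σ₁/σ₀) := by
      rw [← hk, Real.log_exp]
    refine ⟨hA, ?_⟩
    have hk1 : σ₁/σ₀ - 1 ≠ 0 := by
      intro h
      apply hne
      field_simp at h
      linarith
    have he1 : Real.exp a - 1 ≠ 0 := by rw [hk]; exact hk1
    rw [← hA, ← hk]
    have h2 : (Real.exp a - 1) * (b / a) = μ₁ - Real.exp a * μ₀ := by linarith
    field_simp at h2 ⊢
    linear_combination h2

lemma param_exists (μ₀ μ₁ σ₀ σ₁ : ℝ) (h₀ : 0 < σ₀) (h₁ : 0 < σ₁) (hne : σ₀ ≠ σ₁) :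
    (gaussianReal μ₀ ⟨σ₀^2, sq_nonneg σ₀⟩).map
        (flow1 (Real.log (σ₁/σ₀)) (Real.log (σ₁/σ₀) * ((μ₁ - (σ₁/σ₀)*μ₀) / ((σ₁/σ₀) - 1))) 1)
      = gaussianReal μ₁ ⟨σ₁^2, sq_nonneg σ₁⟩ := by
  set a := Real.log (σ₁/σ₀) with hA
  have hk : Real.exp a = σ₁ / σ₀ := Real.exp_log (by positivity)
  have ha : a ≠ 0 := by
    intro h
    apply hne
    rw [h, Real.exp_zero] at hk
    field_simp at hk
    linarith
  have hk1 : σ₁/σ₀ - 1 ≠ 0 := by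
    intro h
    apply hne
    field_simp at h
    linarith
  rw [flow1_one _ _ ha, map_affine_var]
  have hcc : a * ((μ₁ - (σ₁/σ₀)*μ₀) / ((σ₁/σ₀) - 1)) / a = (μ₁ - (σ₁/σ₀)*μ₀) / ((σ₁/σ₀) - 1) :=
    mul_div_cancel_left₀ _ ha
  have e1 : Real.exp a * μ₀ + (Real.exp a - 1) * (a * ((μ₁ - (σ₁/σ₀)*μ₀) / ((σ₁/σ₀) - 1)) / a) = μ₁ := by
    rw [hcc, hk, ← mul_div_assoc, mul_div_cancel_left₀ _ hk1]
    ring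
  have e2 : Real.exp a * σ₀ = σ₁ := by
    rw [hk]; field_simp
  rw [e1, e2]

lemma exp_int_aux (a : ℝ) (ha : a ≠ 0) :
    ∫ t in (0:ℝ)..1, Real.exp (a*t)^2 = (Real.exp (2*a) - 1)/(2*a) := by
  have he : ∀ t : ℝ, Real.exp (a*t)^2 = Real.exp (2*a*t) := by
    intro t; rw [sq, ← Real.exp_add]; ring_nf
  simp_rw [he]
  have hd : ∀ t : ℝ, HasDerivAt (fun s : ℝ => Real.exp (2*a*s)/(2*a)) (Real.exp (2*a*t)) t := by
    intro t
    have h1 : HasDerivAt (fun s : ℝ => 2*a*s) (2*a) t := by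
      simpa using (hasDerivAt_id t).const_mul (2*a)
    have := h1.exp.div_const (2*a)
    refine this.congr_deriv ?_
    field_simp
  rw [intervalIntegral.integral_eq_sub_of_hasDerivAt (fun t _ => hd t)
      ((Real.continuous_exp.comp (continuous_const.mul continuous_id)).intervalIntegrable 0 1)]
  simp [mul_comm]
  ring

lemma inner_eval (a b x : ℝ) (ha : a ≠ 0) :
    ∫ t in (0:ℝ)..1, (quad1 a b (flow1 a b 1 x) - quad1 a b (flow1 a b t x))
      = ((a/2) * Real.exp (2*a) - (Real.exp (2*a) - 1)/4) * (x + b/a)^2 := by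
  have hfl : ∀ t, flow1 a b t x = Real.exp (a*t) * (x + b/a) - b/a := by
    intro t; rw [flow1_eq]; exact sol_spec a b ha t x
  have hint : ∀ t : ℝ, quad1 a b (flow1 a b 1 x) - quad1 a b (flow1 a b t x)
      = ((a/2) * (x + b/a)^2) * (Real.exp (a*1)^2 - Real.exp (a*t)^2) := by
    intro t
    rw [hfl, hfl]
    unfold quad1
    field_simp
    ring
  rw [intervalIntegral.integral_congr (g := fun t : ℝ =>
      ((a/2) * (x + b/a)^2) * (Real.exp (a*1)^2 - Real.exp (a*t)^2)) (fun t _ => hint t)]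
  rw [intervalIntegral.integral_const_mul]
  have hsub : ∫ t in (0:ℝ)..1, (Real.exp (a*1)^2 - Real.exp (a*t)^2)
      = Real.exp (a*1)^2 - (Real.exp (2*a) - 1)/(2*a) := by
    rw [intervalIntegral.integral_sub (intervalIntegrable_const)
        ((Continuous.intervalIntegrable (by fun_prop : Continuous fun t : ℝ => Real.exp (a*t)^2) 0 1)),
      exp_int_aux a ha]
    simp
  rw [hsub]
  have h2 : Real.exp (a*1)^2 = Real.exp (2*a) := by
    rw [sq, ← Real.exp_add]; ring_nf
  rw [h2]
  field_simp
  ring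

end Aux

/-- **Corollary 1, unequal variances.** -/
theorem stmt15 (μ₀ μ₁ σ₀ σ₁ : ℝ) (h₀ : 0 < σ₀) (h₁ : 0 < σ₁) (hne : σ₀ ≠ σ₁) :
    DWKL1 (gaussianReal μ₀ ⟨σ₀ ^ 2, sq_nonneg σ₀⟩) (gaussianReal μ₁ ⟨σ₁ ^ 2, sq_nonneg σ₁⟩) =
      ((σ₀ ^ 2 - σ₁ ^ 2 + σ₁ ^ 2 * Real.log (σ₁ ^ 2 / σ₀ ^ 2)) / (4 * (σ₁ - σ₀) ^ 2))
        * ((σ₁ - σ₀) ^ 2 + (μ₁ - μ₀) ^ 2) := by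
  set a := Real.log (σ₁/σ₀) with hA
  set b := Real.log (σ₁/σ₀) * ((μ₁ - (σ₁/σ₀)*μ₀) / ((σ₁/σ₀) - 1)) with hB
  have hk : Real.exp a = σ₁ / σ₀ := Real.exp_log (by positivity)
  have ha : a ≠ 0 := by
    intro h
    apply hne
    rw [h, Real.exp_zero] at hk
    field_simp at hk
    linarith
  have hk1 : σ₁/σ₀ - 1 ≠ 0 := by
    intro h
    apply hne
    field_simp at h
    linarith
  have hex : ∃ p : ℝ × ℝ,
      (gaussianReal μ₀ ⟨σ₀ ^ 2, sq_nonneg σ₀⟩).map (flow1 p.1 p.2 1)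
        = gaussianReal μ₁ ⟨σ₁ ^ 2, sq_nonneg σ₁⟩ :=
    ⟨(a, b), param_exists μ₀ μ₁ σ₀ σ₁ h₀ h₁ hne⟩
  rw [DWKL1, dif_pos hex]
  obtain ⟨hq1, hq2⟩ := param_unique μ₀ μ₁ σ₀ σ₁ h₀ h₁ hne hex.choose hex.choose_spec
  rw [← hA] at hq1
  rw [← hA, ← hB] at hq2
  simp only [hq1, hq2]
  have hin : (fun x => ∫ t in (0:ℝ)..1, (quad1 a b (flow1 a b 1 x) - quad1 a b (flow1 a b t x)))
      = fun x => ((a/2) * Real.exp (2*a) - (Real.exp (2*a) - 1)/4) * (x + b/a)^2 :=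
    funext (fun x => inner_eval a b x ha)
  rw [hin, integral_const_mul, integral_shift_sq μ₀ (b/a) h₀]
  have hc : b / a = (μ₁ - (σ₁/σ₀)*μ₀) / ((σ₁/σ₀) - 1) := by
    rw [hB, ← hA, mul_div_cancel_left₀ _ ha]
  have he2 : Real.exp (2*a) = (σ₁/σ₀)^2 := by
    rw [two_mul, Real.exp_add, hk, sq]
  have hlog : Real.log (σ₁^2/σ₀^2) = 2*a := by
    rw [hA, ← div_pow, Real.log_pow]
    push_cast
    ring
  rw [hc, he2, hlog]
  have hσ0 : σ₀ ≠ 0 := h₀.ne'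
  have hσd : σ₁ - σ₀ ≠ 0 := sub_ne_zero.mpr (Ne.symm hne)
  field_simp
  ring
end

section
/- (Corollary 1, equal variances) Let μ = N(μ₀, σ²) and ν = N(μ₁, σ²) be univariate Gaussian measures on ℝ with σ > 0. Then D_WKL(μ ∥ ν) = ½ (μ₁ − μ₀)². -/
open Matrix MeasureTheory ProbabilityTheory
open scoped Classical

noncomputable def fl (a b t x : ℝ) : ℝ :=
  if a = 0 then x + b * t else Real.exp (a*t) * x + b / a * (Real.exp (a*t) - 1)

lemma fl_zero (a b x : ℝ) : fl a b 0 x = x := by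
  unfold fl; split_ifs <;> simp

lemma fl_deriv (a b x t : ℝ) :
    HasDerivAt (fun s => fl a b s x) (a * fl a b t x + b) t := by
  rcases eq_or_ne a 0 with h | h
  · simp only [fl, if_pos h, h]
    simpa using ((hasDerivAt_id t).const_mul b).const_add x
  · simp only [fl, if_neg h]
    have hE : HasDerivAt (fun s : ℝ => Real.exp (a*s)) (Real.exp (a*t) * (a*1)) t :=
      ((hasDerivAt_id t).const_mul a).exp
    have := (hE.mul_const x).add ((hE.sub_const 1).const_mul (b/a))
    refine this.congr_deriv ?_
    field_simp
    ring

lemma fl_unique (a b : ℝ) (φ : ℝ → ℝ → ℝ)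
    (h0 : ∀ x, φ 0 x = x)
    (hd : ∀ x t, HasDerivAt (fun s => φ s x) (a * φ t x + b) t) :
    ∀ t x, φ t x = fl a b t x := by
  intro t x
  set g : ℝ → ℝ := fun s => Real.exp (-(a*s)) * (φ s x - fl a b s x) with hg
  have hderiv : ∀ s, HasDerivAt g 0 s := by
    intro s
    have hE : HasDerivAt (fun u : ℝ => Real.exp (-(a*u))) (Real.exp (-(a*s)) * (-(a*1))) s :=
      (((hasDerivAt_id s).const_mul a).neg).exp
    have h2 : HasDerivAt (fun u => φ u x - fl a b u x)
        ((a * φ s x + b) - (a * fl a b s x + b)) s := (hd x s).sub (fl_deriv a b x s)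
    have h3 := hE.mul h2
    refine h3.congr_deriv ?_
    ring
  have hconst : g t = g 0 :=
    is_const_of_deriv_eq_zero (fun u => (hderiv u).differentiableAt)
      (fun u => (hderiv u).deriv) t 0
  have h0' : g 0 = 0 := by simp [hg, h0, fl_zero]
  rw [h0'] at hconst
  rcases mul_eq_zero.mp hconst with h | h
  · exact absurd h (Real.exp_ne_zero _)
  · linarith [sub_eq_zero.mp h]


lemma gaussianPDFReal_continuous (m : ℝ) (v : NNReal) : Continuous (gaussianPDFReal m v) := by
  unfold gaussianPDFReal
  fun_prop

lemma gauss_inj_s16 {m₁ m₂ : ℝ} {v₁ v₂ : NNReal} (h₁ : v₁ ≠ 0) (h₂ : v₂ ≠ 0)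
    (h : gaussianReal m₁ v₁ = gaussianReal m₂ v₂) : m₁ = m₂ ∧ (v₁ : ℝ) = v₂ := by
  have hr1 := rnDeriv_gaussianReal m₁ v₁
  rw [h] at hr1
  have hr2 := rnDeriv_gaussianReal m₂ v₂
  have hae : gaussianPDF m₁ v₁ =ᵐ[volume] gaussianPDF m₂ v₂ := hr1.symm.trans hr2
  have haer : gaussianPDFReal m₁ v₁ =ᵐ[volume] gaussianPDFReal m₂ v₂ := by
    filter_upwards [hae] with x hx
    exact (ENNReal.ofReal_eq_ofReal_iff (gaussianPDFReal_nonneg m₁ v₁ x)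
      (gaussianPDFReal_nonneg m₂ v₂ x)).mp hx
  have heqf := (Continuous.ae_eq_iff_eq volume (gaussianPDFReal_continuous m₁ v₁) (gaussianPDFReal_continuous m₂ v₂)).mp haer 
  have heq : ∀ x, gaussianPDFReal m₁ v₁ x = gaussianPDFReal m₂ v₂ x := fun x => congrFun heqf x
  set p := (v₁ : ℝ) with hpdef
  set q := (v₂ : ℝ) with hqdef
  have hp : 0 < p := NNReal.coe_pos.mpr (pos_iff_ne_zero.mpr h₁)
  have hq : 0 < q := NNReal.coe_pos.mpr (pos_iff_ne_zero.mpr h₂)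
  have hlog : ∀ x : ℝ, Real.log ((Real.sqrt (2*Real.pi*p))⁻¹) + (- (x - m₁)^2 / (2*p))
      = Real.log ((Real.sqrt (2*Real.pi*q))⁻¹) + (- (x - m₂)^2 / (2*q)) := by
    intro x
    have hx := heq x
    unfold gaussianPDFReal at hx
    have hne1 : ((Real.sqrt (2*Real.pi*p))⁻¹ : ℝ) ≠ 0 := by positivity
    have hne2 : ((Real.sqrt (2*Real.pi*q))⁻¹ : ℝ) ≠ 0 := by positivity
    have := congrArg Real.log hx
    rwa [Real.log_mul hne1 (Real.exp_ne_zero _), Real.log_mul hne2 (Real.exp_ne_zero _),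
      Real.log_exp, Real.log_exp] at this
  have K0 := hlog 0
  have K1 := hlog 1
  have K2 := hlog (-1)
  simp only [neg_div] at K0 K1 K2
  have D1 : (1 - m₁)^2 / (2*p) - (0 - m₁)^2 / (2*p)
      = (1 - m₂)^2 / (2*q) - (0 - m₂)^2 / (2*q) := by
    have e1 : -(1 - m₁)^2 / (2*p) = -((1 - m₁)^2 / (2*p)) := by ring
    linarith [K1, K0]
  have D2 : ((-1) - m₁)^2 / (2*p) - (0 - m₁)^2 / (2*p)
      = ((-1) - m₂)^2 / (2*q) - (0 - m₂)^2 / (2*q) := by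
    linarith [K2, K0]
  rw [div_sub_div_same, div_sub_div_same, div_eq_div_iff (by positivity) (by positivity)] at D1 D2
  have hpq : p = q := by nlinarith [D1, D2]
  constructor
  · rw [hpq] at D1 D2
    have h4 : (4 * m₁) * (2*q) = (4 * m₂) * (2*q) := by nlinarith [D1, D2]
    have := mul_right_cancel₀ (by positivity : (2*q) ≠ 0) h4
    linarith
  · exact hpq

lemma flow1_eq_s16 (a b : ℝ) : flow1 a b = fl a b := by
  have hex : ∃ φ : ℝ → ℝ → ℝ,
      (∀ x₀, φ 0 x₀ = x₀) ∧ ∀ x₀ t, HasDerivAt (fun s => φ s x₀) (a * φ t x₀ + b) t :=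
    ⟨fl a b, fun x => fl_zero a b x, fun x t => fl_deriv a b x t⟩
  rw [flow1, dif_pos hex]
  funext t x
  exact fl_unique a b _ hex.choose_spec.1 hex.choose_spec.2 t x

/-- **Corollary 1, equal variances.** -/
theorem stmt16 (μ₀ μ₁ σ : ℝ) (hσ : 0 < σ) :
    DWKL1 (gaussianReal μ₀ ⟨σ ^ 2, sq_nonneg σ⟩) (gaussianReal μ₁ ⟨σ ^ 2, sq_nonneg σ⟩) =
      (1 / 2) * (μ₁ - μ₀) ^ 2 := by
  set V : NNReal := ⟨σ ^ 2, sq_nonneg σ⟩ with hV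
  have hVne : V ≠ 0 := by
    intro hc
    have : σ ^ 2 = 0 := congrArg NNReal.toReal hc
    nlinarith
  have hmap0 : ∀ c : ℝ, (gaussianReal μ₀ V).map (flow1 0 c 1) = gaussianReal (μ₀ + c) V := by
    intro c
    have hfun : flow1 0 c 1 = fun x => x + c := by
      rw [flow1_eq_s16]; funext x; simp [fl]
    rw [hfun]
    exact gaussianReal_map_add_const c
  have hex : ∃ p : ℝ × ℝ, (gaussianReal μ₀ V).map (flow1 p.1 p.2 1) = gaussianReal μ₁ V :=
    ⟨(0, μ₁ - μ₀), by simpa using hmap0 (μ₁ - μ₀)⟩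
  rw [DWKL1, dif_pos hex]
  set p := hex.choose with hpdef
  have hspec : (gaussianReal μ₀ V).map (flow1 p.1 p.2 1) = gaussianReal μ₁ V := hex.choose_spec
  -- identify p
  set a := p.1 with hadef
  set b := p.2 with hbdef
  set k : ℝ := Real.exp a with hk
  have hkpos : 0 < k := Real.exp_pos a
  set c : ℝ := if a = 0 then b else b / a * (Real.exp a - 1) with hc
  have hfun : flow1 a b 1 = fun x => k * x + c := by
    rw [flow1_eq_s16]
    funext x
    simp only [fl, hc, hk]
    split_ifs with h
    · simp [h]
    · simp
  have hmap : (gaussianReal μ₀ V).map (flow1 a b 1)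
      = gaussianReal (k * μ₀ + c) (⟨k ^ 2, sq_nonneg k⟩ * V) := by
    rw [hfun]
    have hcomp : (fun x : ℝ => k * x + c) = (fun x => x + c) ∘ (fun x => k * x) := rfl
    rw [hcomp, ← Measure.map_map (measurable_id'.add_const c) (measurable_id'.const_mul k)]
    rw [gaussianReal_map_const_mul k, gaussianReal_map_add_const c]
    rfl
  rw [hmap] at hspec
  have hvne' : (⟨k ^ 2, sq_nonneg k⟩ * V : NNReal) ≠ 0 := by
    intro hcon
    rcases mul_eq_zero.mp hcon with h | h
    · have : k ^ 2 = 0 := congrArg NNReal.toReal h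
      nlinarith
    · exact hVne h
  obtain ⟨hmean, hvar⟩ := gauss_inj_s16 hvne' hVne hspec
  have hvar' : k ^ 2 * σ ^ 2 = σ ^ 2 := by
    have := hvar
    push_cast at this
    convert this using 2
    all_goals rfl
  have hk1 : k = 1 := by
    have hσ2 : 0 < σ ^ 2 := by positivity
    have hk2 : k ^ 2 = 1 := by nlinarith
    have hfac : (k - 1) * (k + 1) = 0 := by nlinarith
    rcases mul_eq_zero.mp hfac with h | h <;> [linarith; linarith]
  have ha0 : a = 0 := by
    have : Real.exp a = Real.exp 0 := by rw [Real.exp_zero]; exact hk1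
    exact Real.exp_eq_exp.mp this
  have hcb : c = b := by rw [hc, if_pos ha0]
  have hb : b = μ₁ - μ₀ := by
    rw [hk1, one_mul, hcb] at hmean
    linarith
  have hinner : ∀ x : ℝ, (∫ t in (0:ℝ)..1,
      (quad1 a b (flow1 a b 1 x) - quad1 a b (flow1 a b t x))) = b ^ 2 / 2 := by
    intro x
    rw [flow1_eq_s16, ha0]
    have hIeq : ∀ t : ℝ, quad1 0 b (fl 0 b 1 x) - quad1 0 b (fl 0 b t x)
        = b ^ 2 - b ^ 2 * t := by
      intro t
      simp only [quad1, fl, eq_self_iff_true, if_true]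
      ring
    simp_rw [hIeq]
    rw [intervalIntegral.integral_sub (g := fun t : ℝ => b ^ 2 * t) intervalIntegrable_const
      ((continuous_const.mul continuous_id').intervalIntegrable _ _),
      intervalIntegral.integral_const, intervalIntegral.integral_const_mul, integral_id]
    norm_num
    ring
  simp_rw [hinner]
  rw [integral_const, probReal_univ, one_smul, hb]
  ring
end
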